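/- arXiv:2311.12017 — 5 statements merged into one kernel-verified Lean document; each statement's English description precedes it below -/
import Mathlib

section
/- Let m ≥ 1 and ε ≥ 0. Let F : {0,1}^m → {0,1}^m be a random function and let k be a uniformly random key for a 4-wise independent family {h_k : {0,1}^{2m} → {0,1}}, with k independent of F, and suppose Pr[F(i) = F(j)] ≤ ε for all distinct i, j ∈ {0,1}^m. Define the random 2^m × 2^m matrix T by T_{i,j} = (−1)^{h_k(F(i) ‖ j)} for i, j ∈ {0,1}^m. Then E[‖T·Tᵀ‖_F²] ≤ 2^{3m+1} + 2^{4m}·ε. -/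
open scoped BigOperators Classical
open Matrix

/-- Probability of an event under a (finite, weighted) probability mass function. -/
noncomputable def pr {Ω : Type*} [Fintype Ω] (p : Ω → ℝ) (E : Ω → Prop) : ℝ :=
  ∑ ω, if E ω then p ω else 0

/-- Squared Frobenius (Hilbert–Schmidt) norm of a real matrix. -/
def frobSq {a b : Type*} [Fintype a] [Fintype b] (M : Matrix a b ℝ) : ℝ :=
  ∑ i, ∑ j, M i j ^ 2

/-- Concatenation `a ‖ b` of two `m`-bit strings into a `2m`-bit string
(`a` is the most significant half). -/
def concatHalf {m : ℕ} (a b : Fin m → Bool) : Fin (2 * m) → Bool :=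
  fun t => if ht : (t : ℕ) < m then a ⟨t.1, ht⟩
    else if ht2 : (t : ℕ) - m < m then b ⟨t.1 - m, ht2⟩ else false

/-! ### Auxiliary lemmas -/


/-- Sign of a bit: `(-1)^b`. -/
def sg (b : Bool) : ℝ := if b then -1 else 1

lemma sg_mul_self (b : Bool) : sg b * sg b = 1 := by cases b <;> norm_num [sg]

lemma pr_congr {Ω : Type*} [Fintype Ω] (p : Ω → ℝ) {E E' : Ω → Prop}
    (h : ∀ ω, E ω ↔ E' ω) : pr p E = pr p E' := by
  unfold pr
  exact Finset.sum_congr rfl fun ω _ => by rw [propext (h ω)]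

lemma part_sum {Ω γ : Type*} [Fintype Ω] [Fintype γ] (p : Ω → ℝ) (X : Ω → γ) (f : γ → ℝ) :
    ∑ c, pr p (fun ω => X ω = c) * f c = ∑ ω, p ω * f (X ω) := by
  classical
  simp only [pr, Finset.sum_mul]
  rw [Finset.sum_comm]
  refine Finset.sum_congr rfl fun ω _ => ?_
  have h : ∀ c, (if X ω = c then p ω else 0) * f c = if X ω = c then p ω * f (X ω) else 0 := by
    intro c; by_cases h : X ω = c <;> simp [h]
  simp only [h, Finset.sum_ite_eq, Finset.mem_univ, if_true]

lemma concat_fst {m : ℕ} {a a' b b' : Fin m → Bool}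
    (h : concatHalf a b = concatHalf a' b') : a = a' := by
  funext t
  have h2 := congrFun h ⟨t.1, by omega⟩
  simp only [concatHalf, t.isLt, dif_pos] at h2
  simpa using h2

lemma concat_snd {m : ℕ} {a a' b b' : Fin m → Bool}
    (h : concatHalf a b = concatHalf a' b') : b = b' := by
  funext t
  have h2 := congrFun h ⟨m + t.1, by omega⟩
  have h3 : ¬ (m + t.1 < m) := by omega
  have h4 : m + t.1 - m = t.1 := by omega
  simp only [concatHalf, h3, dif_neg, not_false_iff, h4, t.isLt, dif_pos] at h2
  simpa using h2

lemma four_sign {n : ℕ} {Ω : Type*} [Fintype Ω] (p : Ω → ℝ)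
    (Hf : Ω → (Fin n → Bool) → Bool)
    (hH4 : ∀ (s : Finset (Fin n → Bool)) (b : (Fin n → Bool) → Bool),
      s.card ≤ 4 →
      pr p (fun ω => ∀ u ∈ s, Hf ω u = b u) = ((1 : ℝ) / 2) ^ s.card)
    (s : Finset (Fin n → Bool)) (hs : s.Nonempty) (hc : s.card ≤ 4) :
    ∑ ω, p ω * ∏ u ∈ s, sg (Hf ω u) = 0 := by
  classical
  have hrestr : ∀ ω, ∏ u ∈ s, sg (Hf ω u) = ∏ u : {x // x ∈ s}, sg (Hf ω u.1) := by
    intro ω; rw [← Finset.prod_coe_sort s (fun u => sg (Hf ω u))]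
  simp only [hrestr]
  rw [← part_sum p (fun ω => (fun u : {x // x ∈ s} => Hf ω u.1))
      (fun b => ∏ u : {x // x ∈ s}, sg (b u))]
  have hev : ∀ b : {x // x ∈ s} → Bool,
      pr p (fun ω => (fun u : {x // x ∈ s} => Hf ω u.1) = b) = ((1:ℝ)/2) ^ s.card := by
    intro b
    have := hH4 s (fun u => if h : u ∈ s then b ⟨u, h⟩ else false) hc
    rw [← this]
    apply pr_congr
    intro ω
    constructor
    · intro h u hu
      have := congrFun h ⟨u, hu⟩
      simpa [hu] using this
    · intro h
      funext u
      have := h u.1 u.2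
      simpa [u.2] using this
  simp only [hev]
  have hsum : ∑ b : {x // x ∈ s} → Bool, ∏ u : {x // x ∈ s}, sg (b u)
      = ∏ u : {x // x ∈ s}, ∑ c : Bool, sg c := by
    have h := Finset.prod_univ_sum (fun _ : {x // x ∈ s} => (Finset.univ : Finset Bool))
      (fun _ c => sg c)
    rw [Fintype.piFinset_univ] at h
    exact h.symm
  have hzero : (∑ c : Bool, sg c) = 0 := by simp [sg]
  have hmain : ∑ b : {x // x ∈ s} → Bool,
      ((1:ℝ)/2) ^ s.card * ∏ u : {x // x ∈ s}, sg (b u) = 0 := by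
    rw [← Finset.mul_sum, hsum, hzero]
    rw [Finset.prod_const]
    have hne : (Finset.univ : Finset {x // x ∈ s}).card ≠ 0 := by
      rw [Finset.card_univ, Fintype.card_coe]
      exact (Finset.card_pos.mpr hs).ne'
    rw [zero_pow hne, mul_zero]
  simpa using hmain

lemma indep_expand {Ω α' β' : Type*} [Fintype Ω] [Fintype α'] [Fintype β']
    (p : Ω → ℝ) (F : Ω → α') (H : Ω → β')
    (hInd : ∀ g h, pr p (fun ω => F ω = g ∧ H ω = h)
      = pr p (fun ω => F ω = g) * pr p (fun ω => H ω = h))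
    (Φ : α' → β' → ℝ) :
    ∑ ω, p ω * Φ (F ω) (H ω)
      = ∑ g, pr p (fun ω => F ω = g) * ∑ ω, p ω * Φ g (H ω) := by
  classical
  rw [← part_sum p (fun ω => (F ω, H ω)) (fun c => Φ c.1 c.2), Fintype.sum_prod_type]
  refine Finset.sum_congr rfl fun g _ => ?_
  rw [← part_sum p H (fun h => Φ g h), Finset.mul_sum]
  refine Finset.sum_congr rfl fun h _ => ?_
  have he : pr p (fun ω => (F ω, H ω) = (g, h)) = pr p (fun ω => F ω = g ∧ H ω = h) :=
    pr_congr p (fun ω => by simp [Prod.ext_iff])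
  rw [he, hInd]; ring

/-- Single-cut construction: if `F` has collision probability at most `ε`
and `Hf` comes from a 4-wise independent family (independent of `F`), then the sign matrix
`T_{ij} = (-1)^{h_k(F(i) ‖ j)}` satisfies `E[‖T Tᵀ‖_F²] ≤ 2^{3m+1} + 2^{4m} ε`. -/
theorem statement8
    (m : ℕ) (hm : 1 ≤ m) (ε : ℝ) (hε : 0 ≤ ε)
    (Ω : Type*) [Fintype Ω] (p : Ω → ℝ)
    (hp0 : ∀ ω, 0 ≤ p ω) (hp1 : ∑ ω, p ω = 1)
    (F : Ω → (Fin m → Bool) → (Fin m → Bool))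
    (Hf : Ω → (Fin (2 * m) → Bool) → Bool)
    -- `Hf` comes from a 4-wise independent family with a uniformly random key
    (hH4 : ∀ (s : Finset (Fin (2 * m) → Bool)) (b : (Fin (2 * m) → Bool) → Bool),
      s.card ≤ 4 →
      pr p (fun ω => ∀ u ∈ s, Hf ω u = b u) = ((1 : ℝ) / 2) ^ s.card)
    -- the key of `Hf` is independent of `F`
    (hInd : ∀ (g : (Fin m → Bool) → (Fin m → Bool)) (hh : (Fin (2 * m) → Bool) → Bool),
      pr p (fun ω => F ω = g ∧ Hf ω = hh)
        = pr p (fun ω => F ω = g) * pr p (fun ω => Hf ω = hh))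
    -- collision bound for `F`
    (hcol : ∀ i j : Fin m → Bool, i ≠ j → pr p (fun ω => F ω i = F ω j) ≤ ε)
    (T : Ω → Matrix (Fin m → Bool) (Fin m → Bool) ℝ)
    (hT : ∀ ω i j, T ω i j = if Hf ω (concatHalf (F ω i) j) then (-1 : ℝ) else 1) :
    ∑ ω, p ω * frobSq (T ω * (T ω)ᵀ) ≤ 2 ^ (3 * m + 1) + 2 ^ (4 * m) * ε := by
  classical
  have hTs : ∀ ω a b, T ω a b = sg (Hf ω (concatHalf (F ω a) b)) := by
    intro ω a b; rw [hT ω a b]; rfl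
  have hsq : ∀ ω a b, T ω a b * T ω a b = 1 := by
    intro ω a b; rw [hTs]; exact sg_mul_self _
  -- Step 1: expand the Frobenius norm into a 4-fold sum of expectations
  have hexp : ∑ ω, p ω * frobSq (T ω * (T ω)ᵀ)
      = ∑ i, ∑ i', ∑ j, ∑ j',
          ∑ ω, p ω * (T ω i j * T ω i' j * (T ω i j' * T ω i' j')) := by
    have h1 : ∀ ω, frobSq (T ω * (T ω)ᵀ)
        = ∑ i, ∑ i', ∑ j, ∑ j', T ω i j * T ω i' j * (T ω i j' * T ω i' j') := by
      intro ω
      simp only [frobSq, Matrix.mul_apply, Matrix.transpose_apply, sq, Finset.sum_mul_sum]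
    calc ∑ ω, p ω * frobSq (T ω * (T ω)ᵀ)
        = ∑ ω, ∑ i, ∑ i', ∑ j, ∑ j',
            p ω * (T ω i j * T ω i' j * (T ω i j' * T ω i' j')) := by
          refine Finset.sum_congr rfl fun ω _ => ?_
          rw [h1]; simp only [Finset.mul_sum]
      _ = ∑ i, ∑ i', ∑ j, ∑ j',
            ∑ ω, p ω * (T ω i j * T ω i' j * (T ω i j' * T ω i' j')) := by
          rw [Finset.sum_comm]
          refine Finset.sum_congr rfl fun i _ => ?_
          rw [Finset.sum_comm]
          refine Finset.sum_congr rfl fun i' _ => ?_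
          rw [Finset.sum_comm]
          refine Finset.sum_congr rfl fun j _ => ?_
          rw [Finset.sum_comm]
  -- Step 2: bound each expectation term
  have key : ∀ i i' j j' : Fin m → Bool,
      (∑ ω, p ω * (T ω i j * T ω i' j * (T ω i j' * T ω i' j')))
        ≤ (if i = i' then (1:ℝ) else 0) + (if j = j' then (1:ℝ) else 0) + ε := by
    intro i i' j j'
    have hind1 : (0:ℝ) ≤ if i = i' then (1:ℝ) else 0 := by split <;> norm_num
    have hind2 : (0:ℝ) ≤ if j = j' then (1:ℝ) else 0 := by split <;> norm_num
    by_cases hii : i = i'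
    · subst hii
      have h1 : ∀ ω, T ω i j * T ω i j * (T ω i j' * T ω i j') = 1 := by
        intro ω; rw [hsq, hsq, mul_one]
      have : (∑ ω, p ω * (T ω i j * T ω i j * (T ω i j' * T ω i j'))) = 1 := by
        simp only [h1, mul_one]; exact hp1
      rw [this, if_pos rfl]
      linarith
    · by_cases hjj : j = j'
      · subst hjj
        have h1 : ∀ ω, T ω i j * T ω i' j * (T ω i j * T ω i' j) = 1 := by
          intro ω; rw [mul_mul_mul_comm, hsq, hsq, mul_one]
        have : (∑ ω, p ω * (T ω i j * T ω i' j * (T ω i j * T ω i' j))) = 1 := by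
          simp only [h1, mul_one]; exact hp1
        rw [this, if_neg hii, if_pos rfl]
        linarith
      · -- main case: i ≠ i', j ≠ j'
        rw [if_neg hii, if_neg hjj]
        have hmain : (∑ ω, p ω * (T ω i j * T ω i' j * (T ω i j' * T ω i' j')))
            = pr p (fun ω => F ω i = F ω i') := by
          simp only [hTs]
          have hstep : (∑ ω, p ω * (sg (Hf ω (concatHalf (F ω i) j)) *
                sg (Hf ω (concatHalf (F ω i') j)) *
                (sg (Hf ω (concatHalf (F ω i) j')) * sg (Hf ω (concatHalf (F ω i') j')))))
              = ∑ g, pr p (fun ω => F ω = g) *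
                  ∑ ω, p ω * (sg (Hf ω (concatHalf (g i) j)) * sg (Hf ω (concatHalf (g i') j)) *
                    (sg (Hf ω (concatHalf (g i) j')) * sg (Hf ω (concatHalf (g i') j')))) :=
            indep_expand p F Hf hInd
              (fun g h => sg (h (concatHalf (g i) j)) * sg (h (concatHalf (g i') j)) *
                (sg (h (concatHalf (g i) j')) * sg (h (concatHalf (g i') j'))))
          rw [hstep]
          have hg : ∀ g : (Fin m → Bool) → (Fin m → Bool),
              (∑ ω, p ω * (sg (Hf ω (concatHalf (g i) j)) * sg (Hf ω (concatHalf (g i') j)) *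
                (sg (Hf ω (concatHalf (g i) j')) * sg (Hf ω (concatHalf (g i') j')))))
              = if g i = g i' then (1:ℝ) else 0 := by
            intro g
            by_cases hgc : g i = g i'
            · rw [if_pos hgc]
              have h1 : ∀ ω, sg (Hf ω (concatHalf (g i) j)) * sg (Hf ω (concatHalf (g i') j)) *
                  (sg (Hf ω (concatHalf (g i) j')) * sg (Hf ω (concatHalf (g i') j'))) = 1 := by
                intro ω; rw [hgc, sg_mul_self, sg_mul_self, mul_one]
              simp only [h1, mul_one]; exact hp1
            · rw [if_neg hgc]
              set u1 := concatHalf (g i) j with hu1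
              set u2 := concatHalf (g i') j with hu2
              set u3 := concatHalf (g i) j' with hu3
              set u4 := concatHalf (g i') j' with hu4
              have d12 : u1 ≠ u2 := fun h => hgc (concat_fst h)
              have d13 : u1 ≠ u3 := fun h => hjj (concat_snd h)
              have d14 : u1 ≠ u4 := fun h => hgc (concat_fst h)
              have d23 : u2 ≠ u3 := fun h => hgc (concat_fst h).symm
              have d24 : u2 ≠ u4 := fun h => hjj (concat_snd h)
              have d34 : u3 ≠ u4 := fun h => hgc (concat_fst h)
              have hcard : ({u1, u2, u3, u4} : Finset (Fin (2*m) → Bool)).card ≤ 4 := by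
                have h1 := Finset.card_insert_le u1 ({u2, u3, u4} : Finset (Fin (2*m) → Bool))
                have h2 := Finset.card_insert_le u2 ({u3, u4} : Finset (Fin (2*m) → Bool))
                have h3 := Finset.card_insert_le u3 ({u4} : Finset (Fin (2*m) → Bool))
                have h4 : ({u4} : Finset (Fin (2*m) → Bool)).card = 1 := Finset.card_singleton _
                omega
              have h0 := four_sign p Hf hH4 {u1, u2, u3, u4}
                (Finset.insert_nonempty _ _) hcard
              have hprod : ∀ ω, ∏ u ∈ ({u1, u2, u3, u4} : Finset (Fin (2*m) → Bool)),
                  sg (Hf ω u)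
                  = sg (Hf ω u1) * sg (Hf ω u2) * (sg (Hf ω u3) * sg (Hf ω u4)) := by
                intro ω
                rw [Finset.prod_insert (by simp [d12, d13, d14]),
                  Finset.prod_insert (by simp [d23, d24]),
                  Finset.prod_insert (by simp [d34]), Finset.prod_singleton]
                ring
              simp only [hprod] at h0
              exact h0
          simp only [hg]
          have hps : (∑ g, pr p (fun ω => F ω = g) * (if g i = g i' then (1:ℝ) else 0))
              = ∑ ω, p ω * (if F ω i = F ω i' then (1:ℝ) else 0) :=
            part_sum p F (fun g => if g i = g i' then (1:ℝ) else 0)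
          rw [hps]
          simp only [pr, mul_ite, mul_one, mul_zero]
          refine Finset.sum_congr rfl fun x _ => ?_
          by_cases hx : F x i = F x i' <;> simp [hx]
        rw [hmain]
        have := hcol i i' hii
        linarith
  -- Step 3: combine
  rw [hexp]
  have hbound : ∑ i, ∑ i', ∑ j, ∑ j',
      (∑ ω, p ω * (T ω i j * T ω i' j * (T ω i j' * T ω i' j')))
      ≤ ∑ i : Fin m → Bool, ∑ i' : Fin m → Bool, ∑ j : Fin m → Bool, ∑ j' : Fin m → Bool,
          ((if i = i' then (1:ℝ) else 0) + (if j = j' then (1:ℝ) else 0) + ε) := by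
    refine Finset.sum_le_sum fun i _ => Finset.sum_le_sum fun i' _ =>
      Finset.sum_le_sum fun j _ => Finset.sum_le_sum fun j' _ => key i i' j j'
  refine hbound.trans ?_
  have hconst : ∀ c : ℝ, (∑ _x : Fin m → Bool, c) = 2 ^ m * c := by
    intro c
    rw [Finset.sum_const, Finset.card_univ, nsmul_eq_mul]
    norm_num [Fintype.card_fun]
  have hite : ∀ x : Fin m → Bool, (∑ y : Fin m → Bool, if x = y then (1:ℝ) else 0) = 1 := by
    intro x
    rw [Finset.sum_ite_eq]
    simp
  have e1 : (2:ℝ) ^ (3 * m + 1) = ((2:ℝ) ^ m) ^ 3 * 2 := by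
    rw [pow_succ, ← pow_mul, mul_comm m 3]
  have e2 : (2:ℝ) ^ (4 * m) = ((2:ℝ) ^ m) ^ 4 := by
    rw [← pow_mul, mul_comm m 4]
  calc ∑ i : Fin m → Bool, ∑ i' : Fin m → Bool, ∑ j : Fin m → Bool, ∑ j' : Fin m → Bool,
        ((if i = i' then (1:ℝ) else 0) + (if j = j' then (1:ℝ) else 0) + ε)
      = ∑ i : Fin m → Bool, ∑ i' : Fin m → Bool, ∑ j : Fin m → Bool,
          ((2:ℝ) ^ m * (if i = i' then (1:ℝ) else 0) + 1 + 2 ^ m * ε) := by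
        refine Finset.sum_congr rfl fun i _ => Finset.sum_congr rfl fun i' _ =>
          Finset.sum_congr rfl fun j _ => ?_
        rw [Finset.sum_add_distrib, Finset.sum_add_distrib, hconst, hconst, hite j]
    _ = ∑ i : Fin m → Bool, ∑ i' : Fin m → Bool,
          ((2:ℝ) ^ m * ((2:ℝ) ^ m * (if i = i' then (1:ℝ) else 0) + 1 + 2 ^ m * ε)) := by
        refine Finset.sum_congr rfl fun i _ => Finset.sum_congr rfl fun i' _ => ?_
        rw [hconst]
    _ = ∑ i : Fin m → Bool, ∑ i' : Fin m → Bool,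
          ((2:ℝ) ^ m * (2:ℝ) ^ m * (if i = i' then (1:ℝ) else 0)
            + ((2:ℝ) ^ m + (2:ℝ) ^ m * ((2:ℝ) ^ m * ε))) := by
        refine Finset.sum_congr rfl fun i _ => Finset.sum_congr rfl fun i' _ => ?_
        ring
    _ = ∑ i : Fin m → Bool,
          ((2:ℝ) ^ m * (2:ℝ) ^ m * 1
            + (2:ℝ) ^ m * ((2:ℝ) ^ m + (2:ℝ) ^ m * ((2:ℝ) ^ m * ε))) := by
        refine Finset.sum_congr rfl fun i _ => ?_
        rw [Finset.sum_add_distrib, ← Finset.mul_sum, hite i, hconst]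
    _ = (2:ℝ) ^ m * ((2:ℝ) ^ m * (2:ℝ) ^ m * 1
            + (2:ℝ) ^ m * ((2:ℝ) ^ m + (2:ℝ) ^ m * ((2:ℝ) ^ m * ε))) := hconst _
    _ ≤ 2 ^ (3 * m + 1) + 2 ^ (4 * m) * ε := le_of_eq (by rw [e1, e2]; ring)
end

section
/- Let m ≥ 1. Let F : {0,1}^m → {0,1}^m be a random function and let k be a uniformly random key for a 4-wise independent family {h_k : {0,1}^{2m} → {0,1}}, with k independent of F, and suppose Pr[F(i) = F(j)] ≤ 2^{1−m} for all distinct i, j ∈ {0,1}^m. Define the random 2^m × 2^m matrix T by T_{i,j} = (−1)^{h_k(F(i) ‖ j)} and set ρ := T·Tᵀ/2^{2m}. Then with probability at least 1 − 2^{2−m/2}, the von Neumann entropy of ρ is at least m/4. -/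
open scoped BigOperators Classical
open Matrix

/-- Von Neumann entropy (base 2) of a Hermitian matrix, defined via its eigenvalues;
junk value `0` if the matrix is not Hermitian. -/
noncomputable def vnEntropy {𝕜 : Type*} [RCLike 𝕜] {d : Type*} [Fintype d] [DecidableEq d]
    (ρ : Matrix d d 𝕜) : ℝ :=
  if h : ρ.IsHermitian then -∑ i, h.eigenvalues i * Real.logb 2 (h.eigenvalues i) else 0

/-! ### Auxiliary lemmas -/

section Aux

lemma pr_nonneg' {Ω : Type*} [Fintype Ω] {p : Ω → ℝ} (hp0 : ∀ ω, 0 ≤ p ω) (E : Ω → Prop) :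
    0 ≤ pr p E := by
  refine Finset.sum_nonneg fun ω _ => ?_
  split
  · exact hp0 ω
  · exact le_rfl

lemma pr_mono' {Ω : Type*} [Fintype Ω] {p : Ω → ℝ} (hp0 : ∀ ω, 0 ≤ p ω) {E E' : Ω → Prop}
    (h : ∀ ω, E ω → E' ω) : pr p E ≤ pr p E' := by
  refine Finset.sum_le_sum fun ω _ => ?_
  by_cases hE : E ω
  · simp [hE, h ω hE]
  · simp only [hE, if_false]
    split
    · exact hp0 ω
    · exact le_rfl

lemma pr_compl' {Ω : Type*} [Fintype Ω] {p : Ω → ℝ} (hp1 : ∑ ω, p ω = 1) (E : Ω → Prop) :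
    pr p (fun ω => ¬ E ω) = 1 - pr p E := by
  rw [← hp1, pr, pr, eq_sub_iff_add_eq, ← Finset.sum_add_distrib]
  refine Finset.sum_congr rfl fun ω _ => ?_
  by_cases hE : E ω <;> simp [hE]

lemma markov' {Ω : Type*} [Fintype Ω] {p : Ω → ℝ} (hp0 : ∀ ω, 0 ≤ p ω) (X : Ω → ℝ)
    (hX : ∀ ω, 0 ≤ X ω) {t : ℝ} (ht : 0 < t) :
    pr p (fun ω => t ≤ X ω) ≤ (∑ ω, p ω * X ω) / t := by
  rw [div_eq_inv_mul, Finset.mul_sum, pr]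
  refine Finset.sum_le_sum fun ω _ => ?_
  by_cases h : t ≤ X ω
  · simp only [h, if_true]
    have h1 : p ω * t ≤ p ω * X ω := mul_le_mul_of_nonneg_left h (hp0 ω)
    have h2 : t⁻¹ * (p ω * t) ≤ t⁻¹ * (p ω * X ω) :=
      mul_le_mul_of_nonneg_left h1 (inv_pos.mpr ht).le
    calc p ω = t⁻¹ * (p ω * t) := by field_simp
    _ ≤ t⁻¹ * (p ω * X ω) := h2
  · simp only [h, if_false]
    have := hp0 ω; have := hX ω
    positivity

lemma jensen_entropy' {d : Type*} [Fintype d] (lam : d → ℝ)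
    (h0 : ∀ i, 0 ≤ lam i) (h1 : ∑ i, lam i = 1) :
    -Real.logb 2 (∑ i, lam i ^ 2) ≤ -∑ i, lam i * Real.logb 2 (lam i) := by
  classical
  set t := Finset.univ.filter (fun i => lam i ≠ 0) with ht
  have hmem : ∀ i ∈ t, lam i ∈ Set.Ioi (0:ℝ) := fun i hi => by
    have : lam i ≠ 0 := (Finset.mem_filter.mp hi).2
    exact lt_of_le_of_ne (h0 i) (Ne.symm this)
  have hsum1 : ∑ i ∈ t, lam i = 1 := by
    rw [← h1]
    exact Finset.sum_filter_of_ne (fun i _ h => by simpa using h)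
  have hsq : ∑ i ∈ t, lam i * lam i = ∑ i, lam i ^ 2 := by
    rw [← Finset.sum_filter_of_ne (s := Finset.univ) (p := fun i => lam i ≠ 0)
      (f := fun i => lam i ^ 2) (fun i _ h hz => h (by simp [hz]))]
    exact Finset.sum_congr rfl fun i _ => by ring
  have jensen := strictConcaveOn_log_Ioi.concaveOn.le_map_sum
    (t := t) (w := lam) (p := lam) (fun i hi => h0 i) hsum1 hmem
  simp only [smul_eq_mul] at jensen
  have hlog : ∑ i, lam i * Real.log (lam i) ≤ Real.log (∑ i, lam i ^ 2) := by
    rw [← hsq]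
    refine le_trans (le_of_eq ?_) jensen
    rw [← Finset.sum_filter_of_ne (s := Finset.univ) (p := fun i => lam i ≠ 0)
      (f := fun i => lam i * Real.log (lam i)) (fun i _ h hz => h (by simp [hz]))]
  have hlog2 : (0:ℝ) < Real.log 2 := Real.log_pos one_lt_two
  rw [neg_le_neg_iff]
  simp only [Real.logb, div_eq_mul_inv]
  calc ∑ i, lam i * (Real.log (lam i) * (Real.log 2)⁻¹)
      = (∑ i, lam i * Real.log (lam i)) * (Real.log 2)⁻¹ := by
        rw [Finset.sum_mul]; exact Finset.sum_congr rfl fun i _ => by ring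
    _ ≤ Real.log (∑ i, lam i ^ 2) * (Real.log 2)⁻¹ :=
        mul_le_mul_of_nonneg_right hlog (inv_pos.mpr hlog2).le

lemma sum_eigenvalues_eq_trace' {n : Type*} [Fintype n] [DecidableEq n]
    {A : Matrix n n ℝ} (hA : A.IsHermitian) :
    ∑ i, hA.eigenvalues i = A.trace := by
  set U : Matrix n n ℝ := (Matrix.IsHermitian.eigenvectorUnitary hA : Matrix n n ℝ) with hUdef
  have hU : star U * U = 1 :=
    Matrix.mem_unitaryGroup_iff'.mp (Matrix.IsHermitian.eigenvectorUnitary hA).2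
  have key : ∀ B : Matrix n n ℝ, (U * B * star U).trace = B.trace := fun B => by
    rw [Matrix.trace_mul_cycle, hU, Matrix.one_mul]
  conv_rhs => rw [hA.spectral_theorem, Unitary.conjStarAlgAut_apply]
  rw [key, Matrix.trace_diagonal]
  simp [RCLike.ofReal]

lemma sum_sq_eigenvalues_eq_trace_sq' {n : Type*} [Fintype n] [DecidableEq n]
    {A : Matrix n n ℝ} (hA : A.IsHermitian) :
    ∑ i, hA.eigenvalues i ^ 2 = (A * A).trace := by
  set U : Matrix n n ℝ := (Matrix.IsHermitian.eigenvectorUnitary hA : Matrix n n ℝ) with hUdef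
  have hU : star U * U = 1 :=
    Matrix.mem_unitaryGroup_iff'.mp (Matrix.IsHermitian.eigenvectorUnitary hA).2
  have hU2 : ∀ X : Matrix n n ℝ, star U * (U * X) = X := fun X => by
    rw [← Matrix.mul_assoc, hU, Matrix.one_mul]
  have key : ∀ B : Matrix n n ℝ, (U * B * star U).trace = B.trace := fun B => by
    rw [Matrix.trace_mul_cycle, hU, Matrix.one_mul]
  set D := Matrix.diagonal ((RCLike.ofReal : ℝ → ℝ) ∘ hA.eigenvalues) with hD
  have hAA : A * A = U * (D * D) * star U := by
    conv_lhs => rw [hA.spectral_theorem, Unitary.conjStarAlgAut_apply]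
    simp only [Matrix.mul_assoc]
    rw [hU2]
  rw [hAA, key, hD, Matrix.diagonal_mul_diagonal, Matrix.trace_diagonal]
  simp [RCLike.ofReal, sq]

lemma concatHalf_left' {m : ℕ} (a b : Fin m → Bool) (i : Fin m) :
    concatHalf a b ⟨i.1, lt_of_lt_of_le i.2 (by omega)⟩ = a i := by
  simp [concatHalf, i.2]

lemma concatHalf_right' {m : ℕ} (a b : Fin m → Bool) (i : Fin m) :
    concatHalf a b ⟨m + i.1, by omega⟩ = b i := by
  have h1 : ¬ (m + i.1 < m) := by omega
  have h2 : m + i.1 - m = i.1 := by omega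
  simp [concatHalf, h1, h2, i.2]

lemma concatHalf_inj' {m : ℕ} {a b a' b' : Fin m → Bool}
    (h : concatHalf a b = concatHalf a' b') : a = a' ∧ b = b' := by
  constructor
  · funext i
    rw [← concatHalf_left' a b i, ← concatHalf_left' a' b' i, h]
  · funext i
    rw [← concatHalf_right' a b i, ← concatHalf_right' a' b' i, h]

/-- Step A: expectation of a product of ±1 hash values over a nonempty set of at most four
distinct points is zero, by 4-wise independence. -/
lemma stepA' {Ω : Type*} [Fintype Ω] {α : Type*} [DecidableEq α] (p : Ω → ℝ)
    (Hf : Ω → α → Bool)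
    (hH4 : ∀ (s : Finset α) (b : α → Bool), s.card ≤ 4 →
      pr p (fun ω => ∀ u ∈ s, Hf ω u = b u) = ((1 : ℝ) / 2) ^ s.card)
    (s : Finset α) (hcard : s.card ≤ 4) (hne : s.Nonempty) :
    ∑ ω, p ω * ∏ u ∈ s, (if Hf ω u then (-1:ℝ) else 1) = 0 := by
  have expand : ∀ ω, ∏ u ∈ s, (if Hf ω u then (-1:ℝ) else 1)
      = ∑ t ∈ s.powerset, (-2:ℝ)^t.card * (if ∀ u ∈ t, Hf ω u = true then 1 else 0) := by
    intro ω
    have h1 : ∀ u ∈ s, (if Hf ω u then (-1:ℝ) else 1)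
        = (fun u => (-2:ℝ) * (if Hf ω u = true then 1 else 0)) u + (fun _ => (1:ℝ)) u := by
      intro u _; by_cases h : Hf ω u <;> simp [h]; norm_num
    rw [Finset.prod_congr rfl h1, Finset.prod_add]
    refine Finset.sum_congr rfl fun t htmem => ?_
    rw [Finset.prod_const_one, mul_one, Finset.prod_mul_distrib, Finset.prod_const,
      Finset.prod_boole]
  calc ∑ ω, p ω * ∏ u ∈ s, (if Hf ω u then (-1:ℝ) else 1)
      = ∑ t ∈ s.powerset, (-2:ℝ)^t.card *
          ∑ ω, (if ∀ u ∈ t, Hf ω u = true then p ω else 0) := by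
        simp_rw [expand, Finset.mul_sum]
        rw [Finset.sum_comm]
        refine Finset.sum_congr rfl fun t _ => ?_
        refine Finset.sum_congr rfl fun ω _ => ?_
        by_cases h : ∀ u ∈ t, Hf ω u = true
        · simp [h]; ring
        · simp [h]
    _ = ∑ t ∈ s.powerset, (-2:ℝ)^t.card * ((1:ℝ)/2)^t.card := by
        refine Finset.sum_congr rfl fun t ht => ?_
        rw [← hH4 t (fun _ => true) (le_trans (Finset.card_le_card
          (Finset.mem_powerset.mp ht)) hcard)]
        rw [pr]
        congr 1
        exact Finset.sum_congr rfl fun ω _ => by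
          by_cases h : ∀ u ∈ t, Hf ω u = true <;> simp [h]
    _ = ∑ t ∈ s.powerset, (-1:ℝ)^t.card := by
        refine Finset.sum_congr rfl fun t _ => ?_
        rw [← mul_pow]; norm_num
    _ = 0 := by
        have := Finset.sum_powerset_neg_one_pow_card_of_nonempty (x := s) hne
        have h2 : ((∑ t ∈ s.powerset, (-1 : ℤ) ^ t.card : ℤ) : ℝ)
            = ∑ t ∈ s.powerset, (-1:ℝ)^t.card := by push_cast; rfl
        rw [← h2, this]; norm_num

/-- Step B: a function of the (independent) hash key can be pulled out of an expectation
against an indicator of the random function. -/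
lemma stepB' {Ω : Type*} [Fintype Ω] {α β : Type*} [Fintype α] [Fintype β] [DecidableEq α]
    [DecidableEq β]
    (p : Ω → ℝ) (F : Ω → α) (Hf : Ω → β)
    (hInd : ∀ (g : α) (hh : β),
      pr p (fun ω => F ω = g ∧ Hf ω = hh) = pr p (fun ω => F ω = g) * pr p (fun ω => Hf ω = hh))
    (g : α) (φ : β → ℝ) :
    ∑ ω, p ω * ((if F ω = g then 1 else 0) * φ (Hf ω))
      = pr p (fun ω => F ω = g) * ∑ ω, p ω * φ (Hf ω) := by
  have h1 : ∀ ω, p ω * ((if F ω = g then 1 else 0) * φ (Hf ω))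
      = ∑ hh, (if F ω = g ∧ Hf ω = hh then p ω else 0) * φ hh := by
    intro ω
    rw [Finset.sum_eq_single (Hf ω)]
    · by_cases h : F ω = g <;> simp [h]
    · intro hh _ hne
      rw [if_neg (fun hc => hne hc.2.symm), zero_mul]
    · intro h; exact absurd (Finset.mem_univ _) h
  have h2 : ∀ ω, p ω * φ (Hf ω) = ∑ hh, (if Hf ω = hh then p ω else 0) * φ hh := by
    intro ω
    rw [Finset.sum_eq_single (Hf ω)]
    · simp
    · intro hh _ hne
      rw [if_neg (fun hc => hne hc.symm), zero_mul]
    · intro h; exact absurd (Finset.mem_univ _) h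
  simp_rw [h1, h2]
  rw [Finset.sum_comm]
  conv_rhs => rw [Finset.sum_comm]
  rw [Finset.mul_sum]
  refine Finset.sum_congr rfl fun hh _ => ?_
  rw [← Finset.sum_mul, ← Finset.sum_mul]
  have e1 : ∑ ω, (if F ω = g ∧ Hf ω = hh then p ω else 0)
      = pr p (fun ω => F ω = g ∧ Hf ω = hh) := by
    rw [pr]; exact Finset.sum_congr rfl fun ω _ => by
      by_cases h : F ω = g ∧ Hf ω = hh <;> simp [h]
  rw [e1, hInd g hh]
  have e2 : ∑ ω, (if Hf ω = hh then p ω else 0) = pr p (fun ω => Hf ω = hh) := by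
    rw [pr]; exact Finset.sum_congr rfl fun ω _ => by by_cases h : Hf ω = hh <;> simp [h]
  rw [e2]; ring

/-- Step D: off-diagonal fourth-moment bound via 4-wise independence and the collision bound. -/
lemma stepD' {m : ℕ} {Ω : Type*} [Fintype Ω] (p : Ω → ℝ)
    (F : Ω → (Fin m → Bool) → (Fin m → Bool))
    (Hf : Ω → (Fin (2 * m) → Bool) → Bool)
    (hH4 : ∀ (s : Finset (Fin (2 * m) → Bool)) (b : (Fin (2 * m) → Bool) → Bool),
      s.card ≤ 4 →
      pr p (fun ω => ∀ u ∈ s, Hf ω u = b u) = ((1 : ℝ) / 2) ^ s.card)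
    (hInd : ∀ (g : (Fin m → Bool) → (Fin m → Bool)) (hh : (Fin (2 * m) → Bool) → Bool),
      pr p (fun ω => F ω = g ∧ Hf ω = hh)
        = pr p (fun ω => F ω = g) * pr p (fun ω => Hf ω = hh))
    (hcol : ∀ i j : Fin m → Bool, i ≠ j → pr p (fun ω => F ω i = F ω j) ≤ 2 / 2 ^ m)
    (T : Ω → Matrix (Fin m → Bool) (Fin m → Bool) ℝ)
    (hT : ∀ ω i j, T ω i j = if Hf ω (concatHalf (F ω i) j) then (-1 : ℝ) else 1)
    (i i' j j' : Fin m → Bool) (hii : i ≠ i') (hjj : j ≠ j') :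
    ∑ ω, p ω * (T ω i j * T ω i' j * T ω i j' * T ω i' j') ≤ 2 / 2 ^ m := by
  classical
  have partition : ∑ ω, p ω * (T ω i j * T ω i' j * T ω i j' * T ω i' j')
      = ∑ g : (Fin m → Bool) → (Fin m → Bool),
          ∑ ω, p ω * ((if F ω = g then (1:ℝ) else 0)
            * (T ω i j * T ω i' j * T ω i j' * T ω i' j')) := by
    rw [Finset.sum_comm]
    refine Finset.sum_congr rfl fun ω _ => ?_
    rw [← Finset.mul_sum]
    congr 1
    rw [← Finset.sum_mul]
    rw [Finset.sum_ite_eq Finset.univ (F ω) (fun _ => (1:ℝ))]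
    simp
  have per_g : ∀ g : (Fin m → Bool) → (Fin m → Bool),
      ∑ ω, p ω * ((if F ω = g then (1:ℝ) else 0)
          * (T ω i j * T ω i' j * T ω i j' * T ω i' j'))
        = pr p (fun ω => F ω = g) * (if g i = g i' then 1 else 0) := by
    intro g
    by_cases hg : g i = g i'
    · have hone : ∀ ω, (if F ω = g then (1:ℝ) else 0)
          * (T ω i j * T ω i' j * T ω i j' * T ω i' j')
          = (if F ω = g then (1:ℝ) else 0) := by
        intro ω
        by_cases h : F ω = g
        · rw [if_pos h, one_mul, hT, hT, hT, hT, h, hg]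
          split_ifs <;> norm_num
        · rw [if_neg h, zero_mul]
      rw [if_pos hg, mul_one]
      rw [Finset.sum_congr rfl fun ω _ => by rw [hone ω]]
      rw [pr]
      exact Finset.sum_congr rfl fun ω _ => by by_cases h : F ω = g <;> simp [h]
    · set u1 := concatHalf (g i) j with hu1
      set u2 := concatHalf (g i') j with hu2
      set u3 := concatHalf (g i) j' with hu3
      set u4 := concatHalf (g i') j' with hu4
      have hu12 : u1 ≠ u2 := fun h => hg (concatHalf_inj' h).1
      have hu13 : u1 ≠ u3 := fun h => hjj (concatHalf_inj' h).2
      have hu14 : u1 ≠ u4 := fun h => hg (concatHalf_inj' h).1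
      have hu23 : u2 ≠ u3 := fun h => hg ((concatHalf_inj' h).1).symm
      have hu24 : u2 ≠ u4 := fun h => hjj (concatHalf_inj' h).2
      have hu34 : u3 ≠ u4 := fun h => hg (concatHalf_inj' h).1
      set s : Finset (Fin (2*m) → Bool) := {u1, u2, u3, u4} with hs
      have hnm1 : u1 ∉ ({u2, u3, u4} : Finset (Fin (2*m) → Bool)) := by
        simp [hu12, hu13, hu14]
      have hnm2 : u2 ∉ ({u3, u4} : Finset (Fin (2*m) → Bool)) := by simp [hu23, hu24]
      have hnm3 : u3 ∉ ({u4} : Finset (Fin (2*m) → Bool)) := by simp [hu34]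
      have hcard4 : s.card ≤ 4 := by
        rw [hs, Finset.card_insert_of_notMem hnm1, Finset.card_insert_of_notMem hnm2,
          Finset.card_insert_of_notMem hnm3, Finset.card_singleton]
      have hprod : ∀ hh : (Fin (2*m) → Bool) → Bool,
          ∏ u ∈ s, (if hh u then (-1:ℝ) else 1)
          = (if hh u1 then (-1:ℝ) else 1) * ((if hh u2 then (-1:ℝ) else 1) *
            ((if hh u3 then (-1:ℝ) else 1) * (if hh u4 then (-1:ℝ) else 1))) := by
        intro hh
        rw [hs, Finset.prod_insert hnm1, Finset.prod_insert hnm2, Finset.prod_insert hnm3,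
          Finset.prod_singleton]
      have hrw : ∀ ω, (if F ω = g then (1:ℝ) else 0)
          * (T ω i j * T ω i' j * T ω i j' * T ω i' j')
          = (if F ω = g then (1:ℝ) else 0)
            * ((fun hh : (Fin (2*m) → Bool) → Bool => ∏ u ∈ s,
                (if hh u then (-1:ℝ) else 1)) (Hf ω)) := by
        intro ω
        by_cases h : F ω = g
        · rw [if_pos h, one_mul, one_mul]
          show T ω i j * T ω i' j * T ω i j' * T ω i' j'
            = ∏ u ∈ s, (if Hf ω u then (-1:ℝ) else 1)
          rw [hprod (Hf ω), hT, hT, hT, hT, h, hu1, hu2, hu3, hu4]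
          ring
        · rw [if_neg h, zero_mul, zero_mul]
      rw [Finset.sum_congr rfl fun ω _ => by rw [hrw ω]]
      rw [stepB' p F Hf hInd g (fun hh => ∏ u ∈ s, (if hh u then (-1:ℝ) else 1))]
      have hzero : ∑ ω, p ω * ∏ u ∈ s, (if Hf ω u then (-1:ℝ) else 1) = 0 :=
        stepA' p Hf hH4 s hcard4 ⟨u1, by rw [hs]; simp⟩
      rw [hzero, if_neg hg]
  rw [partition, Finset.sum_congr rfl fun g _ => per_g g]
  have collapse : ∑ g : (Fin m → Bool) → (Fin m → Bool),
      pr p (fun ω => F ω = g) * (if g i = g i' then 1 else 0)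
      = pr p (fun ω => F ω i = F ω i') := by
    simp_rw [pr, Finset.sum_mul]
    rw [Finset.sum_comm]
    refine Finset.sum_congr rfl fun ω _ => ?_
    rw [Finset.sum_eq_single (F ω)]
    · by_cases h : F ω i = F ω i' <;> simp [h]
    · intro g _ hne
      rw [if_neg (fun hc => hne hc.symm), zero_mul]
    · intro h; exact absurd (Finset.mem_univ _) h
  rw [collapse]
  exact hcol i i' hii

/-- Step G: small purity (Frobenius norm of `T Tᵀ`) forces large von Neumann entropy. -/
lemma stepG' {m : ℕ} (T : Matrix (Fin m → Bool) (Fin m → Bool) ℝ)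
    (hT1 : ∀ i j, T i j * T i j = 1)
    (hX : frobSq (T * Tᵀ) < ((2:ℝ)^m)^4 * (2:ℝ)^(-((m:ℝ)/2))) :
    (m:ℝ)/4 ≤ vnEntropy (((1 : ℝ) / 2 ^ (2 * m)) • (T * Tᵀ)) := by
  classical
  have hKc : (Fintype.card (Fin m → Bool)) = 2^m := by simp [Fintype.card_fun]
  have h2m : (2:ℝ)^(2*m) = ((2:ℝ)^m)^2 := by rw [mul_comm 2 m, pow_mul]
  set c : ℝ := (1:ℝ)/2^(2*m) with hc
  have hc0 : 0 < c := by positivity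
  set M := T * Tᵀ with hMdef
  have hct : Tᴴ = Tᵀ := Matrix.conjTranspose_eq_transpose_of_trivial T
  have hMpsd : M.PosSemidef := by
    rw [hMdef, ← hct]; exact Matrix.posSemidef_self_mul_conjTranspose T
  have hMh : M.IsHermitian := hMpsd.1
  have hρh : (c • M).IsHermitian := by
    show (c • M)ᴴ = c • M
    rw [Matrix.conjTranspose_smul, hMh.eq, star_trivial]
  have hρpsd : (c • M).PosSemidef := by
    exact hMpsd.smul hc0.le
  have hlam0 : ∀ i, 0 ≤ hρh.eigenvalues i := fun i => hρpsd.eigenvalues_nonneg i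
  have htrM : M.trace = ((2:ℝ)^m)^2 := by
    rw [Matrix.trace]
    have hdiag : ∀ i, M.diag i = (2:ℝ)^m := by
      intro i
      simp only [Matrix.diag_apply, hMdef, Matrix.mul_apply, Matrix.transpose_apply, hT1]
      simp [Finset.card_univ, hKc]
    rw [Finset.sum_congr rfl fun i _ => hdiag i]
    simp [Finset.card_univ, hKc, sq]
  have hsum1 : ∑ i, hρh.eigenvalues i = 1 := by
    rw [sum_eigenvalues_eq_trace' hρh, Matrix.trace_smul, htrM, smul_eq_mul, hc, h2m]
    field_simp
  have hMsym : ∀ a b, M a b = M b a := by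
    intro a b
    conv_lhs => rw [← hMh.eq]
    simp [Matrix.conjTranspose_apply]
  have htrMM : (M * M).trace = frobSq M := by
    rw [Matrix.trace, frobSq]
    refine Finset.sum_congr rfl fun i _ => ?_
    simp only [Matrix.diag_apply, Matrix.mul_apply]
    exact Finset.sum_congr rfl fun k _ => by rw [hMsym k i, sq]
  have hsumsq : ∑ i, hρh.eigenvalues i ^ 2 = c^2 * frobSq M := by
    rw [sum_sq_eigenvalues_eq_trace_sq' hρh, Matrix.smul_mul, Matrix.mul_smul,
      Matrix.trace_smul, Matrix.trace_smul, htrMM, smul_eq_mul, smul_eq_mul]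
    ring
  have hlt : ∑ i, hρh.eigenvalues i ^ 2 < (2:ℝ)^(-((m:ℝ)/2)) := by
    rw [hsumsq]
    calc c^2 * frobSq M < c^2 * (((2:ℝ)^m)^4 * (2:ℝ)^(-((m:ℝ)/2))) := by
          exact mul_lt_mul_of_pos_left hX (by positivity)
      _ = (2:ℝ)^(-((m:ℝ)/2)) := by
          rw [hc, h2m]
          have h0 : ((2:ℝ)^m) ≠ 0 := by positivity
          field_simp
  have hpos : 0 < ∑ i, hρh.eigenvalues i ^ 2 := by
    obtain ⟨i, _, hne⟩ := Finset.exists_ne_zero_of_sum_ne_zero (by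
      rw [hsum1]; exact one_ne_zero)
    exact lt_of_lt_of_le (by positivity) (Finset.single_le_sum
      (fun k _ => sq_nonneg (hρh.eigenvalues k)) (Finset.mem_univ i))
  rw [vnEntropy, dif_pos hρh]
  have hJ := jensen_entropy' hρh.eigenvalues hlam0 hsum1
  have hmono : Real.logb 2 (∑ i, hρh.eigenvalues i ^ 2) ≤ Real.logb 2 ((2:ℝ)^(-((m:ℝ)/2))) :=
    Real.logb_le_logb_of_le one_lt_two hpos hlt.le
  have hval : Real.logb 2 ((2:ℝ)^(-((m:ℝ)/2))) = -((m:ℝ)/2) :=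
    Real.logb_rpow (by norm_num) (by norm_num)
  have hm0 : (0:ℝ) ≤ m := Nat.cast_nonneg m
  calc (m:ℝ)/4 ≤ (m:ℝ)/2 := by linarith
    _ ≤ -Real.logb 2 (∑ i, hρh.eigenvalues i ^ 2) := by rw [hval] at hmono; linarith
    _ ≤ -∑ i, hρh.eigenvalues i * Real.logb 2 (hρh.eigenvalues i) := hJ

end Aux

/-- Single-cut construction: if `F` has collision probability at most
`2^{1-m}` and `Hf` comes from a 4-wise independent family (independent of `F`), then with
probability at least `1 - 2^{2-m/2}` the von Neumann entropy of `ρ = T Tᵀ / 2^{2m}` is at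
least `m/4`. -/
theorem statement9
    (m : ℕ) (hm : 1 ≤ m)
    (Ω : Type*) [Fintype Ω] (p : Ω → ℝ)
    (hp0 : ∀ ω, 0 ≤ p ω) (hp1 : ∑ ω, p ω = 1)
    (F : Ω → (Fin m → Bool) → (Fin m → Bool))
    (Hf : Ω → (Fin (2 * m) → Bool) → Bool)
    -- `Hf` comes from a 4-wise independent family with a uniformly random key
    (hH4 : ∀ (s : Finset (Fin (2 * m) → Bool)) (b : (Fin (2 * m) → Bool) → Bool),
      s.card ≤ 4 →
      pr p (fun ω => ∀ u ∈ s, Hf ω u = b u) = ((1 : ℝ) / 2) ^ s.card)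
    -- the key of `Hf` is independent of `F`
    (hInd : ∀ (g : (Fin m → Bool) → (Fin m → Bool)) (hh : (Fin (2 * m) → Bool) → Bool),
      pr p (fun ω => F ω = g ∧ Hf ω = hh)
        = pr p (fun ω => F ω = g) * pr p (fun ω => Hf ω = hh))
    -- collision bound for `F`
    (hcol : ∀ i j : Fin m → Bool, i ≠ j → pr p (fun ω => F ω i = F ω j) ≤ 2 / 2 ^ m)
    (T : Ω → Matrix (Fin m → Bool) (Fin m → Bool) ℝ)
    (hT : ∀ ω i j, T ω i j = if Hf ω (concatHalf (F ω i) j) then (-1 : ℝ) else 1) :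
    1 - (2 : ℝ) ^ ((2 : ℝ) - (m : ℝ) / 2)
      ≤ pr p (fun ω =>
          (m : ℝ) / 4
            ≤ vnEntropy (((1 : ℝ) / 2 ^ (2 * m)) • (T ω * (T ω)ᵀ))) := by
  classical
  have hX_expand : ∀ ω, frobSq (T ω * (T ω)ᵀ) = ∑ i, ∑ i', ∑ j, ∑ j',
      T ω i j * T ω i' j * T ω i j' * T ω i' j' := by
    intro ω
    rw [frobSq]
    refine Finset.sum_congr rfl fun i _ => Finset.sum_congr rfl fun i' _ => ?_
    rw [Matrix.mul_apply]
    simp only [Matrix.transpose_apply]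
    rw [sq, Finset.sum_mul_sum]
    exact Finset.sum_congr rfl fun j _ => Finset.sum_congr rfl fun j' _ => by ring
  have hswap : ∑ ω, p ω * frobSq (T ω * (T ω)ᵀ) = ∑ i, ∑ i', ∑ j, ∑ j',
      ∑ ω, p ω * (T ω i j * T ω i' j * T ω i j' * T ω i' j') := by
    simp_rw [hX_expand, Finset.mul_sum]
    rw [Finset.sum_comm]
    refine Finset.sum_congr rfl fun i _ => ?_
    rw [Finset.sum_comm]
    refine Finset.sum_congr rfl fun i' _ => ?_
    rw [Finset.sum_comm]
    refine Finset.sum_congr rfl fun j _ => ?_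
    rw [Finset.sum_comm]
  have hterm_bound : ∀ i i' j j' : Fin m → Bool,
      ∑ ω, p ω * (T ω i j * T ω i' j * T ω i j' * T ω i' j')
      ≤ (if i = i' then (1:ℝ) else 0) + ((if j = j' then (1:ℝ) else 0) + 2/2^m) := by
    intro i i' j j'
    have h2m : (0:ℝ) ≤ 2/2^m := by positivity
    by_cases hii : i = i'
    · have hone : ∀ ω, T ω i j * T ω i' j * T ω i j' * T ω i' j' = 1 := by
        intro ω; subst hii; simp only [hT]; split_ifs <;> norm_num
      have he : ∑ ω, p ω * (T ω i j * T ω i' j * T ω i j' * T ω i' j') = 1 := by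
        rw [Finset.sum_congr rfl fun ω _ => by rw [hone ω, mul_one], hp1]
      rw [he, if_pos hii]
      have : (0:ℝ) ≤ (if j = j' then (1:ℝ) else 0) := by positivity
      linarith
    · by_cases hjj : j = j'
      · have hone : ∀ ω, T ω i j * T ω i' j * T ω i j' * T ω i' j' = 1 := by
          intro ω; subst hjj; simp only [hT]; split_ifs <;> norm_num
        have he : ∑ ω, p ω * (T ω i j * T ω i' j * T ω i j' * T ω i' j') = 1 := by
          rw [Finset.sum_congr rfl fun ω _ => by rw [hone ω, mul_one], hp1]
        rw [he, if_neg hii, if_pos hjj]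
        linarith
      · have := stepD' p F Hf hH4 hInd hcol T hT i i' j j' hii hjj
        rw [if_neg hii, if_neg hjj]
        linarith
  have hcount : ∑ i : Fin m → Bool, ∑ i' : Fin m → Bool, ∑ j : Fin m → Bool,
      ∑ j' : Fin m → Bool,
      ((if i = i' then (1:ℝ) else 0) + ((if j = j' then (1:ℝ) else 0) + 2/2^m))
      = 4 * ((2:ℝ)^m)^3 := by
    have hK : (Fintype.card (Fin m → Bool)) = 2^m := by simp [Fintype.card_fun]
    have hKr : ((Fintype.card (Fin m → Bool) : ℕ) : ℝ) = (2:ℝ)^m := by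
      rw [hK]; push_cast; ring
    simp only [Finset.sum_add_distrib, Finset.sum_const, Finset.card_univ, nsmul_eq_mul,
      Finset.sum_ite_eq, Finset.mem_univ, if_true]
    rw [hKr]
    have h2m : (0:ℝ) < 2^m := by positivity
    field_simp
    simp only [mul_ite, mul_one, mul_zero, Finset.sum_ite_eq, Finset.mem_univ, if_true, Finset.sum_const,
      Finset.card_univ, hKr, nsmul_eq_mul]
    ring
  have hEX : ∑ ω, p ω * frobSq (T ω * (T ω)ᵀ) ≤ 4 * ((2:ℝ)^m)^3 := by
    rw [hswap, ← hcount]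
    exact Finset.sum_le_sum fun i _ => Finset.sum_le_sum fun i' _ =>
      Finset.sum_le_sum fun j _ => Finset.sum_le_sum fun j' _ => hterm_bound i i' j j'
  have hXnn : ∀ ω, 0 ≤ frobSq (T ω * (T ω)ᵀ) := fun ω =>
    Finset.sum_nonneg fun _ _ => Finset.sum_nonneg fun _ _ => sq_nonneg _
  have ht0 : 0 < ((2:ℝ)^m)^4 * (2:ℝ)^(-((m:ℝ)/2)) := by positivity
  have hmar := markov' hp0 (fun ω => frobSq (T ω * (T ω)ᵀ)) hXnn ht0
  have hfrac : 4 * ((2:ℝ)^m)^3 / (((2:ℝ)^m)^4 * (2:ℝ)^(-((m:ℝ)/2)))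
      = (2:ℝ)^((2:ℝ) - (m:ℝ)/2) := by
    have h2 : (0:ℝ) < 2 := two_pos
    have hNr : (2:ℝ)^m = (2:ℝ) ^ ((m:ℕ):ℝ) := (Real.rpow_natCast 2 m).symm
    rw [hNr, ← Real.rpow_natCast ((2:ℝ) ^ ((m:ℕ):ℝ)) 3, ← Real.rpow_natCast ((2:ℝ) ^ ((m:ℕ):ℝ)) 4,
      ← Real.rpow_mul h2.le, ← Real.rpow_mul h2.le]
    rw [show (4:ℝ) = (2:ℝ)^((2:ℕ):ℝ) by rw [Real.rpow_natCast]; norm_num]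
    rw [← Real.rpow_add h2, ← Real.rpow_add h2, ← Real.rpow_sub h2]
    congr 1
    push_cast
    ring
  have hbad : pr p (fun ω => ((2:ℝ)^m)^4 * (2:ℝ)^(-((m:ℝ)/2)) ≤ frobSq (T ω * (T ω)ᵀ))
      ≤ (2:ℝ)^((2:ℝ) - (m:ℝ)/2) := by
    refine le_trans hmar ?_
    rw [← hfrac]
    exact (div_le_div_iff_of_pos_right ht0).mpr hEX
  have hGood : ∀ ω, ¬ (((2:ℝ)^m)^4 * (2:ℝ)^(-((m:ℝ)/2)) ≤ frobSq (T ω * (T ω)ᵀ)) →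
      (m:ℝ)/4 ≤ vnEntropy (((1 : ℝ) / 2 ^ (2 * m)) • (T ω * (T ω)ᵀ)) := by
    intro ω h
    refine stepG' (T ω) (fun i j => ?_) (not_le.mp h)
    rw [hT]; split <;> norm_num
  calc 1 - (2:ℝ)^((2:ℝ) - (m:ℝ)/2)
      ≤ 1 - pr p (fun ω => ((2:ℝ)^m)^4 * (2:ℝ)^(-((m:ℝ)/2)) ≤ frobSq (T ω * (T ω)ᵀ)) := by
        linarith
    _ = pr p (fun ω => ¬ (((2:ℝ)^m)^4 * (2:ℝ)^(-((m:ℝ)/2)) ≤ frobSq (T ω * (T ω)ᵀ))) :=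
        (pr_compl' hp1 _).symm
    _ ≤ pr p (fun ω => (m : ℝ) / 4
          ≤ vnEntropy (((1 : ℝ) / 2 ^ (2 * m)) • (T ω * (T ω)ᵀ))) :=
        pr_mono' hp0 fun ω h => hGood ω h
end

section
/- Let p = 16, let q = 16c for an integer c ≥ 1, and let m ≥ 1. For a uniformly random m × m matrix A over Z/qZ, the probability that the map x ↦ ⌊A·x⌉_p from {0,1}^m (binary vectors viewed as 0/1 vectors over Z/qZ) to (Z/pZ)^m is injective is at least 1 − 2^{1−2m}. -/
open scoped BigOperators Classical
open Matrix

/-- The rounding map `⌊·⌉_p : Z/qZ → Z/pZ`, sending `x` to `⌊x̄ · p / q⌋` where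
`x̄ ∈ {0, …, q-1}` is the standard representative of `x`. -/
def roundTo (q p : ℕ) (x : ZMod q) : ZMod p := ((x.val * p) / q : ℕ)

/-- A binary vector viewed as a 0/1 vector over `Z/qZ`. -/
def binVec (q : ℕ) {m : ℕ} (x : Fin m → Bool) : Fin m → ZMod q :=
  fun j => if x j then 1 else 0

lemma roundTo_eq_div (c : ℕ) (hc : 1 ≤ c) (u : ZMod (16 * c)) :
    roundTo (16 * c) 16 u = ((u.val / c : ℕ) : ZMod 16) := by
  unfold roundTo
  congr 1
  have h : ∀ v : ℕ, v * 16 / (16 * c) = v / c := by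
    intro v
    rw [mul_comm (16 : ℕ) c]
    exact Nat.mul_div_mul_right _ _ (by norm_num)
  exact h u.val

lemma roundTo_add (c : ℕ) (hc : 1 ≤ c) (u : ZMod (16 * c)) (k : ℕ) (hk : k < 16) :
    roundTo (16 * c) 16 (u + ((k * c : ℕ) : ZMod (16 * c)))
      = roundTo (16 * c) 16 u + (k : ZMod 16) := by
  have hc0 : 0 < c := hc
  haveI : NeZero (16 * c) := ⟨by positivity⟩
  rw [roundTo_eq_div c hc, roundTo_eq_div c hc]
  have h1 : (u + ((k * c : ℕ) : ZMod (16 * c))).val = (u.val + k * c) % (16 * c) := by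
    rw [ZMod.val_add, ZMod.val_natCast,
      Nat.mod_eq_of_lt ((Nat.mul_lt_mul_right hc0).mpr hk)]
  have h2 : ∀ v : ℕ, (v + k * c) % (16 * c) / c = (v / c + k) % 16 := by
    intro v
    rw [mul_comm (16 : ℕ) c, Nat.mod_mul_right_div_self,
      Nat.add_mul_div_right _ _ hc0]
  rw [h1, h2 u.val, ZMod.natCast_mod]
  push_cast
  ring

lemma dot_update {m : ℕ} {R : Type*} [CommRing R] (r : Fin m → R) (j : Fin m) (a : R)
    (w : Fin m → R) :
    Function.update r j a ⬝ᵥ w = r ⬝ᵥ w + (a - r j) * w j := by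
  classical
  have h1 : ∀ i, Function.update r j a i * w i
      = Function.update (fun i => r i * w i) j (a * w j) i := by
    intro i
    rcases eq_or_ne i j with rfl | h
    · simp
    · simp [Function.update_of_ne h]
  have e1 : Function.update r j a ⬝ᵥ w = a * w j + ∑ i ∈ Finset.univ \ {j}, r i * w i := by
    rw [dotProduct, Finset.sum_congr rfl (fun i _ => h1 i),
      Finset.sum_update_of_mem (Finset.mem_univ j)]
  have e2 : r ⬝ᵥ w = r j * w j + ∑ i ∈ Finset.univ \ {j}, r i * w i := by
    conv_lhs => rw [dotProduct, ← Function.update_eq_self j (fun i => r i * w i)]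
    rw [Finset.sum_update_of_mem (Finset.mem_univ j)]
  rw [e1, e2]
  ring

lemma row_bound (c : ℕ) (hc : 1 ≤ c) [NeZero (16 * c)] {m : ℕ} {x y : Fin m → Bool} (j : Fin m)
    (hx : x j = true) (hy : y j = false) :
    (Finset.univ.filter (fun r : Fin m → ZMod (16 * c) =>
        roundTo (16 * c) 16 (r ⬝ᵥ binVec (16 * c) x)
          = roundTo (16 * c) 16 (r ⬝ᵥ binVec (16 * c) y))).card * 16 ≤ (16 * c) ^ m := by
  set T := Finset.univ.filter (fun r : Fin m → ZMod (16 * c) =>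
      roundTo (16 * c) 16 (r ⬝ᵥ binVec (16 * c) x)
        = roundTo (16 * c) 16 (r ⬝ᵥ binVec (16 * c) y)) with hT
  have hbx : binVec (16 * c) x j = 1 := by simp [binVec, hx]
  have hby : binVec (16 * c) y j = 0 := by simp [binVec, hy]
  set F : (Fin m → ZMod (16 * c)) × Fin 16 → (Fin m → ZMod (16 * c)) :=
    fun p => Function.update p.1 j (p.1 j + ((p.2.1 * c : ℕ) : ZMod (16 * c))) with hF
  have hFx : ∀ (r : Fin m → ZMod (16 * c)) (k : Fin 16),
      F (r, k) ⬝ᵥ binVec (16 * c) x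
        = r ⬝ᵥ binVec (16 * c) x + ((k.1 * c : ℕ) : ZMod (16 * c)) := by
    intro r k
    show Function.update r j _ ⬝ᵥ _ = _
    rw [dot_update, hbx]; ring
  have hFy : ∀ (r : Fin m → ZMod (16 * c)) (k : Fin 16),
      F (r, k) ⬝ᵥ binVec (16 * c) y = r ⬝ᵥ binVec (16 * c) y := by
    intro r k
    show Function.update r j _ ⬝ᵥ _ = _
    rw [dot_update, hby]; ring
  have hround : ∀ p : (Fin m → ZMod (16 * c)) × Fin 16, p.1 ∈ T →
      roundTo (16 * c) 16 (F p ⬝ᵥ binVec (16 * c) x)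
        = roundTo (16 * c) 16 (F p ⬝ᵥ binVec (16 * c) y) + (p.2.1 : ZMod 16) := by
    rintro ⟨r, k⟩ hr
    rw [hT, Finset.mem_filter] at hr
    rw [hFx, hFy, roundTo_add c hc _ _ k.2, hr.2]
  have hinj : Set.InjOn F ↑(T ×ˢ (Finset.univ : Finset (Fin 16))) := by
    rintro ⟨r, k⟩ hp ⟨r', k'⟩ hp' hEq
    rw [Finset.mem_coe, Finset.mem_product] at hp hp'
    have h1 := hround (r, k) hp.1
    have h2 := hround (r', k') hp'.1
    rw [hEq] at h1
    have hkk : (k.1 : ZMod 16) = (k'.1 : ZMod 16) := add_left_cancel (h1.symm.trans h2)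
    have hk : k = k' := by
      apply Fin.ext
      have := congrArg ZMod.val hkk
      rwa [ZMod.val_cast_of_lt k.2, ZMod.val_cast_of_lt k'.2] at this
    subst hk
    have hrr : r = r' := by
      funext i
      rcases eq_or_ne i j with rfl | h
      · have := congrFun hEq i
        simp only [hF, Function.update_self] at this
        exact add_right_cancel this
      · have := congrFun hEq i
        simpa only [hF, Function.update_of_ne h] using this
    rw [hrr]
  have hcard : (T ×ˢ (Finset.univ : Finset (Fin 16))).card
      ≤ (Finset.univ : Finset (Fin m → ZMod (16 * c))).card :=
    Finset.card_le_card_of_injOn F (fun _ _ => Finset.mem_univ _) hinj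
  rw [Finset.card_product, Finset.card_univ, Fintype.card_fin] at hcard
  rwa [Finset.card_univ, Fintype.card_fun, ZMod.card, Fintype.card_fin] at hcard

lemma row_bound' (c : ℕ) (hc : 1 ≤ c) [NeZero (16 * c)] {m : ℕ} {x y : Fin m → Bool}
    (hxy : x ≠ y) :
    (Finset.univ.filter (fun r : Fin m → ZMod (16 * c) =>
        roundTo (16 * c) 16 (r ⬝ᵥ binVec (16 * c) x)
          = roundTo (16 * c) 16 (r ⬝ᵥ binVec (16 * c) y))).card * 16 ≤ (16 * c) ^ m := by
  obtain ⟨j, hj⟩ := Function.ne_iff.mp hxy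
  rcases hx : x j with _ | _ <;> rcases hy : y j with _ | _
  · exact absurd (hx.trans hy.symm) hj
  · have hswap : (Finset.univ.filter (fun r : Fin m → ZMod (16 * c) =>
        roundTo (16 * c) 16 (r ⬝ᵥ binVec (16 * c) x)
          = roundTo (16 * c) 16 (r ⬝ᵥ binVec (16 * c) y)))
        = (Finset.univ.filter (fun r : Fin m → ZMod (16 * c) =>
        roundTo (16 * c) 16 (r ⬝ᵥ binVec (16 * c) y)
          = roundTo (16 * c) 16 (r ⬝ᵥ binVec (16 * c) x))) := by
      apply Finset.filter_congr
      intro r _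
      exact eq_comm
    rw [hswap]
    exact row_bound c hc j hy hx
  · exact row_bound c hc j hx hy
  · exact absurd (hx.trans hy.symm) hj

lemma matrix_card (Q : ℕ) [NeZero Q] {m : ℕ} (x y : Fin m → Bool) :
    (Finset.univ.filter (fun A : Matrix (Fin m) (Fin m) (ZMod Q) =>
        ∀ i, roundTo Q 16 (A.mulVec (binVec Q x) i)
          = roundTo Q 16 (A.mulVec (binVec Q y) i))).card
      = (Finset.univ.filter (fun r : Fin m → ZMod Q =>
          roundTo Q 16 (r ⬝ᵥ binVec Q x) = roundTo Q 16 (r ⬝ᵥ binVec Q y))).card ^ m := by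
  set T := Finset.univ.filter (fun r : Fin m → ZMod Q =>
      roundTo Q 16 (r ⬝ᵥ binVec Q x) = roundTo Q 16 (r ⬝ᵥ binVec Q y)) with hT
  have key : (Finset.univ.filter (fun A : Matrix (Fin m) (Fin m) (ZMod Q) =>
        ∀ i, roundTo Q 16 (A.mulVec (binVec Q x) i)
          = roundTo Q 16 (A.mulVec (binVec Q y) i))).card
      = (Fintype.piFinset (fun _ : Fin m => T)).card := by
    apply Finset.card_bij (fun A _ => Matrix.of.symm A)
    · intro A hA
      rw [Finset.mem_filter] at hA
      rw [Fintype.mem_piFinset]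
      intro i
      rw [hT, Finset.mem_filter]
      exact ⟨Finset.mem_univ _, hA.2 i⟩
    · intro A _ A' _ hEq
      exact Matrix.of.symm.injective hEq
    · intro f hf
      refine ⟨Matrix.of f, ?_, rfl⟩
      rw [Finset.mem_filter]
      refine ⟨Finset.mem_univ _, fun i => ?_⟩
      rw [Fintype.mem_piFinset] at hf
      have := hf i
      rw [hT, Finset.mem_filter] at this
      exact this.2
  rw [key, Fintype.card_piFinset, Finset.prod_const, Finset.card_univ, Fintype.card_fin]

/-- With `p = 16` and `q = 16 c`, for a uniformly random `m × m` matrix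
`A` over `Z/qZ`, the map `x ↦ ⌊A x⌉_p` from `{0,1}^m` to `(Z/pZ)^m` is injective with
probability at least `1 - 2^{1-2m}`. -/
theorem statement11 (c m q : ℕ) (hc : 1 ≤ c) (hm : 1 ≤ m) (hq : q = 16 * c) [NeZero q] :
    (1 : ℝ) - 2 / 2 ^ (2 * m) ≤
      ((Finset.univ.filter (fun A : Matrix (Fin m) (Fin m) (ZMod q) =>
          Function.Injective fun x : Fin m → Bool =>
            fun i : Fin m => roundTo q 16 (A.mulVec (binVec q x) i))).card : ℝ)
        / (Fintype.card (Matrix (Fin m) (Fin m) (ZMod q)) : ℝ) := by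
  subst hq
  set Good := Finset.univ.filter (fun A : Matrix (Fin m) (Fin m) (ZMod (16 * c)) =>
      Function.Injective fun x : Fin m → Bool =>
        fun i : Fin m => roundTo (16 * c) 16 (A.mulVec (binVec (16 * c) x) i)) with hGood
  set Bad := Finset.univ.filter (fun A : Matrix (Fin m) (Fin m) (ZMod (16 * c)) =>
      ¬ Function.Injective fun x : Fin m → Bool =>
        fun i : Fin m => roundTo (16 * c) 16 (A.mulVec (binVec (16 * c) x) i)) with hBad
  have htotal : Fintype.card (Matrix (Fin m) (Fin m) (ZMod (16 * c))) = ((16 * c) ^ m) ^ m := by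
    rw [Fintype.card_congr (Matrix.of (m := Fin m) (n := Fin m) (α := ZMod (16 * c))).symm]
    rw [Fintype.card_fun, Fintype.card_fun, ZMod.card, Fintype.card_fin]
  have hsplit : Good.card + Bad.card = ((16 * c) ^ m) ^ m := by
    rw [hGood, hBad, Finset.card_filter_add_card_filter_not, Finset.card_univ, htotal]
  set P := Finset.univ.filter
      (fun p : (Fin m → Bool) × (Fin m → Bool) => p.1 ≠ p.2) with hP
  set S : (Fin m → Bool) × (Fin m → Bool) → Finset (Matrix (Fin m) (Fin m) (ZMod (16 * c))) :=
    fun p => Finset.univ.filter (fun A =>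
      ∀ i, roundTo (16 * c) 16 (A.mulVec (binVec (16 * c) p.1) i)
        = roundTo (16 * c) 16 (A.mulVec (binVec (16 * c) p.2) i)) with hS
  have hsub : Bad ⊆ P.biUnion S := by
    intro A hA
    rw [hBad, Finset.mem_filter] at hA
    obtain ⟨x, y, hfxy, hxy⟩ := Function.not_injective_iff.mp hA.2
    rw [Finset.mem_biUnion]
    refine ⟨(x, y), ?_, ?_⟩
    · rw [hP, Finset.mem_filter]; exact ⟨Finset.mem_univ _, hxy⟩
    · rw [hS, Finset.mem_filter]
      exact ⟨Finset.mem_univ _, fun i => congrFun hfxy i⟩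
  have hPcard : P.card ≤ 2 ^ (2 * m) := by
    calc P.card ≤ Fintype.card ((Fin m → Bool) × (Fin m → Bool)) := by
          rw [← Finset.card_univ]; exact Finset.card_le_card (Finset.filter_subset _ _)
      _ = 2 ^ (2 * m) := by
          rw [Fintype.card_prod, Fintype.card_fun, Fintype.card_bool, Fintype.card_fin,
            ← pow_add, two_mul]
  have hScard : ∀ p ∈ P, (S p).card * 2 ^ (4 * m) ≤ (((16 * c)) ^ m) ^ m := by
    intro p hp
    rw [hP, Finset.mem_filter] at hp
    rw [hS]
    simp only
    rw [matrix_card]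
    have hrow := row_bound' c hc (m := m) hp.2
    calc (Finset.univ.filter (fun r : Fin m → ZMod (16 * c) =>
            roundTo (16 * c) 16 (r ⬝ᵥ binVec (16 * c) p.1)
              = roundTo (16 * c) 16 (r ⬝ᵥ binVec (16 * c) p.2))).card ^ m * 2 ^ (4 * m)
        = ((Finset.univ.filter (fun r : Fin m → ZMod (16 * c) =>
            roundTo (16 * c) 16 (r ⬝ᵥ binVec (16 * c) p.1)
              = roundTo (16 * c) 16 (r ⬝ᵥ binVec (16 * c) p.2))).card * 16) ^ m := by
          rw [mul_pow]
          congr 1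
          rw [show (16 : ℕ) = 2 ^ 4 by norm_num, ← pow_mul]
      _ ≤ (((16 * c)) ^ m) ^ m := Nat.pow_le_pow_left hrow m
  have hBadcard : Bad.card * 2 ^ (4 * m) ≤ 2 ^ (2 * m) * (((16 * c)) ^ m) ^ m := by
    calc Bad.card * 2 ^ (4 * m) ≤ (P.biUnion S).card * 2 ^ (4 * m) :=
          Nat.mul_le_mul_right _ (Finset.card_le_card hsub)
      _ ≤ (∑ p ∈ P, (S p).card) * 2 ^ (4 * m) :=
          Nat.mul_le_mul_right _ Finset.card_biUnion_le
      _ = ∑ p ∈ P, (S p).card * 2 ^ (4 * m) := by rw [Finset.sum_mul]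
      _ ≤ ∑ _p ∈ P, (((16 * c)) ^ m) ^ m := Finset.sum_le_sum hScard
      _ = P.card * (((16 * c)) ^ m) ^ m := by rw [Finset.sum_const, smul_eq_mul]
      _ ≤ 2 ^ (2 * m) * (((16 * c)) ^ m) ^ m := Nat.mul_le_mul_right _ hPcard
  have hBad2 : Bad.card * 2 ^ (2 * m) ≤ ((16 * c) ^ m) ^ m := by
    have h4 : (4 : ℕ) * m = 2 * m + 2 * m := by ring
    rw [h4, pow_add, ← mul_assoc, mul_comm (2 ^ (2 * m)) (((16 * c) ^ m) ^ m)] at hBadcard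
    exact Nat.le_of_mul_le_mul_right hBadcard (by positivity)
  have hXpos : (0 : ℝ) < (((16 * c) ^ m) ^ m : ℕ) := by positivity
  rw [htotal]
  have hGR : (Good.card : ℝ) = (((16 * c) ^ m) ^ m : ℕ) - (Bad.card : ℝ) := by
    have := congrArg (fun n : ℕ => (n : ℝ)) hsplit
    push_cast at this ⊢
    linarith
  rw [hGR, sub_div, div_self (ne_of_gt hXpos)]
  have hfrac : (Bad.card : ℝ) / (((16 * c) ^ m) ^ m : ℕ) ≤ 2 / 2 ^ (2 * m) := by
    rw [div_le_div_iff₀ hXpos (by positivity)]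
    have hcast : (Bad.card : ℝ) * 2 ^ (2 * m) ≤ (((16 * c) ^ m) ^ m : ℕ) := by
      exact_mod_cast hBad2
    linarith
  linarith
end

section
/- Let p = 16, let q = 16c for an integer c ≥ 1, let m, r ≥ 1, and let {h_k : (Z/pZ)^m → (Z/2Z)^m}_{k∈K} be an r-wise independent family. For a uniformly random m × m matrix A over Z/qZ, with probability at least 1 − 2^{1−2m} the family of functions {x ↦ h_k(⌊A·x⌉_p)}_{k∈K} from {0,1}^m to (Z/2Z)^m (with k uniform on K) is r-wise independent. -/
open scoped BigOperators Classical
open Matrix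

namespace Statement12Aux

open Finset

section fibers

variable {G H : Type*} [Fintype G] [DecidableEq H] [AddCommGroup G] [AddCommGroup H]

lemma fiber_card_congr (φ : G →+ H) (hs : Function.Surjective φ) (b₁ b₂ : H) :
    (univ.filter fun a => φ a = b₁).card = (univ.filter fun a => φ a = b₂).card := by
  obtain ⟨a₀, ha₀⟩ := hs (b₂ - b₁)
  apply Finset.card_bij' (fun a _ => a + a₀) (fun a _ => a - a₀)
  · intro a ha
    simp only [Finset.mem_filter, Finset.mem_univ, true_and] at ha ⊢
    rw [map_add, ha, ha₀]; abel
  · intro a ha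
    simp only [Finset.mem_filter, Finset.mem_univ, true_and] at ha ⊢
    rw [map_sub, ha, ha₀]; abel
  · intros; simp
  · intros; simp

lemma card_preimage_filter [Fintype H] (φ : G →+ H) (hs : Function.Surjective φ)
    (P : H → Prop) [DecidablePred P] :
    (univ.filter fun a => P (φ a)).card * Fintype.card H
      = (univ.filter P).card * Fintype.card G := by
  set N := (univ.filter fun a => φ a = 0).card with hN
  have h1 : ∀ b : H, (univ.filter fun a => φ a = b).card = N :=
    fun b => fiber_card_congr φ hs b 0
  have h2 : (univ.filter fun a => P (φ a)).card = (univ.filter P).card * N := by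
    rw [Finset.card_eq_sum_card_fiberwise (f := φ) (t := univ.filter P)
      (by intro a ha; simp only [mem_coe, mem_filter, mem_univ, true_and] at ha ⊢; exact ha)]
    rw [Finset.sum_congr rfl (fun b hb => ?_), Finset.sum_const, smul_eq_mul]
    have : (univ.filter fun a => P (φ a)).filter (fun a => φ a = b)
        = univ.filter fun a => φ a = b := by
      ext a
      simp only [mem_filter, mem_univ, true_and, and_iff_right_iff_imp]
      rintro rfl
      exact (mem_filter.mp hb).2
    rw [this, h1]
  have h3 : Fintype.card G = Fintype.card H * N := by
    rw [← Finset.card_univ (α := G),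
      Finset.card_eq_sum_card_fiberwise (f := φ) (t := univ) (by simp)]
    simp [h1, Finset.sum_const, Finset.card_univ]
  rw [h2, h3]; ring

end fibers

section dot

variable {m q : ℕ}

def dotHom (x : Fin m → ZMod q) : (Fin m → ZMod q) →+ ZMod q where
  toFun a := ∑ k, a k * x k
  map_zero' := by simp
  map_add' a b := by simp [add_mul, Finset.sum_add_distrib]

lemma dot_single (x : Fin m → ZMod q) (i : Fin m) (z : ZMod q) :
    dotHom x (Pi.single i z) = z * x i := by
  simp only [dotHom, AddMonoidHom.coe_mk, ZeroHom.coe_mk]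
  rw [Finset.sum_eq_single i]
  · simp
  · intro k _ hk; simp [Pi.single_eq_of_ne hk]
  · simp

lemma dotHom_surj (x : Fin m → ZMod q) (i : Fin m) (hu : IsUnit (x i)) :
    Function.Surjective (dotHom x) := by
  obtain ⟨u, hu'⟩ := hu
  intro t
  refine ⟨Pi.single i (t * ↑u⁻¹), ?_⟩
  rw [dot_single, ← hu', mul_assoc, Units.inv_mul, mul_one]

def pairHom (x y : Fin m → ZMod q) : (Fin m → ZMod q) →+ ZMod q × ZMod q :=
  (dotHom x).prod (dotHom y)

lemma pairHom_surj (x y : Fin m → ZMod q) (i j : Fin m)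
    (hd : IsUnit (x i * y j - x j * y i)) :
    Function.Surjective (pairHom x y) := by
  obtain ⟨d, hd'⟩ := hd
  rintro ⟨s, t⟩
  have he : (x i * y j - x j * y i) * ↑d⁻¹ = 1 := by
    rw [← hd']; exact Units.mul_inv _
  refine ⟨Pi.single i ((s * y j - t * x j) * ↑d⁻¹)
    + Pi.single j ((t * x i - s * y i) * ↑d⁻¹), Prod.ext ?_ ?_⟩
  · show dotHom x _ = s
    rw [map_add, dot_single, dot_single]
    linear_combination s * he
  · show dotHom y _ = t
    rw [map_add, dot_single, dot_single]
    linear_combination t * he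

end dot

section rounding

variable {c q : ℕ}

lemma round_eq_iff (hq : q = 16 * c) (hc : 0 < c) [NeZero q] (s t : ZMod q) :
    roundTo q 16 s = roundTo q 16 t ↔ s.val / c = t.val / c := by
  have hnat : ∀ n : ℕ, n * 16 / q = n / c := by
    intro n
    rw [hq, mul_comm 16 c, Nat.mul_div_mul_right _ _ (by norm_num : (0:ℕ) < 16)]
  have hlt : ∀ u : ZMod q, u.val / c < 16 := by
    intro u
    rw [Nat.div_lt_iff_lt_mul hc]
    have := ZMod.val_lt u
    omega
  unfold roundTo
  rw [hnat, hnat]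
  constructor
  · intro hh
    have := congrArg ZMod.val hh
    rwa [ZMod.val_cast_of_lt (by simpa using hlt s),
      ZMod.val_cast_of_lt (by simpa using hlt t)] at this
  · intro hh; rw [hh]

lemma roundTo_zero [NeZero q] : roundTo q 16 (0 : ZMod q) = 0 := by
  unfold roundTo
  simp

lemma class_card_le (hc : 0 < c) [NeZero q] (d : ℕ) :
    (univ.filter fun s : ZMod q => s.val / c = d).card ≤ c := by
  have : (univ.filter fun s : ZMod q => s.val / c = d).card ≤ (univ : Finset (Fin c)).card := by
    apply Finset.card_le_card_of_injOn (fun s => ⟨s.val % c, Nat.mod_lt _ hc⟩)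
    · intro s _; exact mem_univ _
    · intro s hs t ht hst
      have hs' : s.val / c = d := by simpa using hs
      have ht' : t.val / c = d := by simpa using ht
      simp only [Fin.mk.injEq] at hst
      have e1 := Nat.div_add_mod s.val c
      have e2 := Nat.div_add_mod t.val c
      rw [hs'] at e1
      rw [ht'] at e2
      exact ZMod.val_injective q (by omega)
  simpa using this

lemma pairs_card_le (hq : q = 16 * c) (hc : 0 < c) [NeZero q] :
    (univ.filter fun p : ZMod q × ZMod q =>
      roundTo q 16 p.1 = roundTo q 16 p.2).card ≤ q * c := by
  have : (univ.filter fun p : ZMod q × ZMod q => roundTo q 16 p.1 = roundTo q 16 p.2).card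
      ≤ (univ : Finset (ZMod q × Fin c)).card := by
    apply Finset.card_le_card_of_injOn (fun p => (p.1, ⟨p.2.val % c, Nat.mod_lt _ hc⟩))
    · intro p _; exact mem_univ _
    · intro p hp p' hp' hpp
      have h1 : p.1.val / c = p.2.val / c := by
        rw [← round_eq_iff hq hc]; simpa using hp
      have h2 : p'.1.val / c = p'.2.val / c := by
        rw [← round_eq_iff hq hc]; simpa using hp'
      simp only [Prod.mk.injEq, Fin.mk.injEq] at hpp
      obtain ⟨h3, h4⟩ := hpp
      rw [← h3] at h2
      have e1 := Nat.div_add_mod p.2.val c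
      have e2 := Nat.div_add_mod p'.2.val c
      rw [← h1] at e1
      rw [← h2] at e2
      exact Prod.ext h3 (ZMod.val_injective q (by omega))
  simpa [Fintype.card_prod, ZMod.card] using this

lemma round_zero_card_le (hq : q = 16 * c) (hc : 0 < c) [NeZero q] :
    (univ.filter fun s : ZMod q => roundTo q 16 s = 0).card ≤ c := by
  have heq : (univ.filter fun s : ZMod q => roundTo q 16 s = 0)
      = (univ.filter fun s : ZMod q => s.val / c = 0) := by
    ext s
    simp only [mem_filter, mem_univ, true_and]
    rw [show (0 : ZMod 16) = roundTo q 16 (0 : ZMod q) from (roundTo_zero).symm,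
      round_eq_iff hq hc]
    simp
  rw [heq]
  exact class_card_le hc 0

end rounding

section rows

variable {c q m : ℕ}

lemma rows_bound (hq : q = 16 * c) (hc : 0 < c) [NeZero q] {u v : Fin m → Bool}
    (huv : u ≠ v) :
    16 * (univ.filter fun a : Fin m → ZMod q =>
      roundTo q 16 (∑ k, a k * binVec q u k)
        = roundTo q 16 (∑ k, a k * binVec q v k)).card ≤ q ^ m := by
  have hq0 : 0 < q := Nat.pos_of_ne_zero (NeZero.ne q)
  have hcardG : Fintype.card (Fin m → ZMod q) = q ^ m := by
    simp [ZMod.card]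
  have hcardH : Fintype.card (ZMod q) = q := ZMod.card q
  by_cases hu0 : u = fun _ => false
  · -- the `u = 0` case
    have hx0 : ∀ a : Fin m → ZMod q, (∑ k, a k * binVec q u k) = 0 := by
      intro a; rw [hu0]; simp [binVec]
    have hfe : (univ.filter fun a : Fin m → ZMod q =>
        roundTo q 16 (∑ k, a k * binVec q u k) = roundTo q 16 (∑ k, a k * binVec q v k))
        = (univ.filter fun a : Fin m → ZMod q =>
            (fun z => roundTo q 16 z = 0) (dotHom (binVec q v) a)) := by
      apply Finset.filter_congr
      intro a _
      rw [hx0 a, roundTo_zero]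
      show _ ↔ roundTo q 16 (∑ k, a k * binVec q v k) = 0
      exact eq_comm
    have hv1 : ∃ i, v i = true := by
      by_contra hcon
      push_neg at hcon
      exact huv (hu0.trans (funext fun k => by simpa using (hcon k).symm).symm) |>.elim
    obtain ⟨i, hi⟩ := hv1
    have hunit : IsUnit (binVec q v i) := by simp [binVec, hi]
    have key := card_preimage_filter (dotHom (binVec q v))
      (dotHom_surj _ i hunit) (fun z => roundTo q 16 z = 0)
    rw [hcardG, hcardH] at key
    have hP := round_zero_card_le hq hc
    apply Nat.le_of_mul_le_mul_right _ hq0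
    calc 16 * (univ.filter fun a : Fin m → ZMod q =>
          roundTo q 16 (∑ k, a k * binVec q u k)
            = roundTo q 16 (∑ k, a k * binVec q v k)).card * q
        = 16 * ((univ.filter fun a : Fin m → ZMod q =>
            (fun z => roundTo q 16 z = 0) (dotHom (binVec q v) a)).card * q) := by
          rw [hfe]; ring
      _ = 16 * ((univ.filter fun z : ZMod q => roundTo q 16 z = 0).card * q ^ m) := by rw [key]
      _ ≤ 16 * (c * q ^ m) := Nat.mul_le_mul_left _ (Nat.mul_le_mul_right _ hP)
      _ = (16 * c) * q ^ m := by ring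
      _ = q ^ m * q := by rw [← hq]; ring
  · by_cases hv0 : v = fun _ => false
    · -- the `v = 0` case
      have hy0 : ∀ a : Fin m → ZMod q, (∑ k, a k * binVec q v k) = 0 := by
        intro a; rw [hv0]; simp [binVec]
      have hfe : (univ.filter fun a : Fin m → ZMod q =>
          roundTo q 16 (∑ k, a k * binVec q u k) = roundTo q 16 (∑ k, a k * binVec q v k))
          = (univ.filter fun a : Fin m → ZMod q =>
              (fun z => roundTo q 16 z = 0) (dotHom (binVec q u) a)) := by
        apply Finset.filter_congr
        intro a _
        rw [hy0 a, roundTo_zero]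
        exact Iff.rfl
      have hu1 : ∃ i, u i = true := by
        by_contra hcon
        push_neg at hcon
        exact huv ((funext fun k => by simpa using (hcon k).symm).symm.trans hv0.symm) |>.elim
      obtain ⟨i, hi⟩ := hu1
      have hunit : IsUnit (binVec q u i) := by simp [binVec, hi]
      have key := card_preimage_filter (dotHom (binVec q u))
        (dotHom_surj _ i hunit) (fun z => roundTo q 16 z = 0)
      rw [hcardG, hcardH] at key
      have hP := round_zero_card_le hq hc
      apply Nat.le_of_mul_le_mul_right _ hq0
      calc 16 * (univ.filter fun a : Fin m → ZMod q =>
            roundTo q 16 (∑ k, a k * binVec q u k)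
              = roundTo q 16 (∑ k, a k * binVec q v k)).card * q
          = 16 * ((univ.filter fun a : Fin m → ZMod q =>
              (fun z => roundTo q 16 z = 0) (dotHom (binVec q u) a)).card * q) := by
            rw [hfe]; ring
        _ = 16 * ((univ.filter fun z : ZMod q => roundTo q 16 z = 0).card * q ^ m) := by rw [key]
        _ ≤ 16 * (c * q ^ m) := Nat.mul_le_mul_left _ (Nat.mul_le_mul_right _ hP)
        _ = (16 * c) * q ^ m := by ring
        _ = q ^ m * q := by rw [← hq]; ring
    · -- both `u` and `v` are nonzero
      set x := binVec q u with hx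
      set y := binVec q v with hy
      have hdet : ∃ i j, IsUnit (x i * y j - x j * y i) := by
        have hj0 : ∃ j, u j ≠ v j := by
          by_contra hcon
          push_neg at hcon
          exact huv (funext hcon)
        obtain ⟨j, hj⟩ := hj0
        cases huj : u j with
        | false =>
          have hvj : v j = true := by
            cases hvj : v j
            · rw [huj, hvj] at hj; exact (hj rfl).elim
            · rfl
          have hu1 : ∃ i, u i = true := by
            by_contra hcon
            push_neg at hcon
            exact hu0 (funext fun k => by simpa using (hcon k))
          obtain ⟨i, hi⟩ := hu1
          refine ⟨i, j, ?_⟩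
          have hone : x i * y j - x j * y i = 1 := by
            rw [hx, hy]; simp [binVec, hi, huj, hvj]
          rw [hone]; exact isUnit_one
        | true =>
          have hvj : v j = false := by
            cases hvj : v j
            · rfl
            · rw [huj, hvj] at hj; exact (hj rfl).elim
          have hv1 : ∃ i, v i = true := by
            by_contra hcon
            push_neg at hcon
            exact hv0 (funext fun k => by simpa using (hcon k))
          obtain ⟨i, hi⟩ := hv1
          refine ⟨i, j, ?_⟩
          have hone : x i * y j - x j * y i = -1 := by
            rw [hx, hy]; simp [binVec, hi, huj, hvj]
          rw [hone]; exact isUnit_one.neg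
      obtain ⟨i, j, hdet⟩ := hdet
      have hsurj := pairHom_surj x y i j hdet
      have key := card_preimage_filter (pairHom x y) hsurj
        (fun p => roundTo q 16 p.1 = roundTo q 16 p.2)
      rw [hcardG] at key
      have hcardHH : Fintype.card (ZMod q × ZMod q) = q * q := by
        simp [Fintype.card_prod, ZMod.card]
      rw [hcardHH] at key
      have hfe : (univ.filter fun a : Fin m → ZMod q =>
          roundTo q 16 (∑ k, a k * x k) = roundTo q 16 (∑ k, a k * y k))
          = (univ.filter fun a : Fin m → ZMod q =>
              (fun p : ZMod q × ZMod q => roundTo q 16 p.1 = roundTo q 16 p.2)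
                (pairHom x y a)) := by
        apply Finset.filter_congr
        intro a _
        exact Iff.rfl
      have hPB := pairs_card_le hq hc
      apply Nat.le_of_mul_le_mul_right _ (show 0 < q * q from Nat.mul_pos hq0 hq0)
      calc 16 * (univ.filter fun a : Fin m → ZMod q =>
            roundTo q 16 (∑ k, a k * x k) = roundTo q 16 (∑ k, a k * y k)).card * (q * q)
          = 16 * ((univ.filter fun a : Fin m → ZMod q =>
              (fun p : ZMod q × ZMod q => roundTo q 16 p.1 = roundTo q 16 p.2)
                (pairHom x y a)).card * (q * q)) := by
            rw [hfe]; ring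
        _ = 16 * ((univ.filter fun p : ZMod q × ZMod q =>
              roundTo q 16 p.1 = roundTo q 16 p.2).card * q ^ m) := by rw [key]
        _ ≤ 16 * ((q * c) * q ^ m) :=
            Nat.mul_le_mul_left _ (Nat.mul_le_mul_right _ hPB)
        _ = (16 * c) * q * q ^ m := by ring
        _ = q * q * q ^ m := by rw [← hq]
        _ = q ^ m * (q * q) := by ring

end rows

end Statement12Aux

open Statement12Aux Finset

/-- With `p = 16` and `q = 16 c`: if `{h_k : (Z/pZ)^m → (Z/2Z)^m}` is an
`r`-wise independent family, then for a uniformly random `m × m` matrix `A` over `Z/qZ`,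
with probability at least `1 - 2^{1-2m}` the composed family
`{x ↦ h_k(⌊A x⌉_p)} : {0,1}^m → (Z/2Z)^m` is `r`-wise independent. -/
theorem statement12 (c m q r : ℕ) (hc : 1 ≤ c) (hm : 1 ≤ m) (hr : 1 ≤ r)
    (hq : q = 16 * c) [NeZero q]
    (K : Type*) [Fintype K] [Nonempty K]
    (h : K → (Fin m → ZMod 16) → (Fin m → ZMod 2))
    -- `{h_k}` (with a uniform key) is an `r`-wise independent family
    (hK : ∀ (s : Finset (Fin m → ZMod 16)) (b : (Fin m → ZMod 16) → Fin m → ZMod 2),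
      s.card ≤ r →
      ((Finset.univ.filter (fun k : K => ∀ u ∈ s, h k u = b u)).card : ℝ)
          / (Fintype.card K : ℝ)
        = ((1 : ℝ) / 2 ^ m) ^ s.card) :
    (1 : ℝ) - 2 / 2 ^ (2 * m) ≤
      ((Finset.univ.filter (fun A : Matrix (Fin m) (Fin m) (ZMod q) =>
          -- the composed family `x ↦ h_k(⌊A x⌉₁₆)` is `r`-wise independent
          ∀ (s : Finset (Fin m → Bool)) (b : (Fin m → Bool) → Fin m → ZMod 2),
            s.card ≤ r →
            ((Finset.univ.filter (fun k : K =>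
                ∀ u ∈ s,
                  h k (fun i => roundTo q 16 (A.mulVec (binVec q u) i)) = b u)).card : ℝ)
                / (Fintype.card K : ℝ)
              = ((1 : ℝ) / 2 ^ m) ^ s.card)).card : ℝ)
        / (Fintype.card (Matrix (Fin m) (Fin m) (ZMod q)) : ℝ) := by
  classical
  have hc0 : 0 < c := hc
  have hq0 : 0 < q := by omega
  set g : Matrix (Fin m) (Fin m) (ZMod q) → (Fin m → Bool) → (Fin m → ZMod 16) :=
    fun A u => fun i => roundTo q 16 (A.mulVec (binVec q u) i) with hgdef
  -- Step 1: injectivity of `g A` implies the `r`-wise independence property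
  have good : ∀ A : Matrix (Fin m) (Fin m) (ZMod q), Function.Injective (g A) →
      ∀ (s : Finset (Fin m → Bool)) (b : (Fin m → Bool) → Fin m → ZMod 2),
        s.card ≤ r →
        ((Finset.univ.filter (fun k : K => ∀ u ∈ s, h k (g A u) = b u)).card : ℝ)
            / (Fintype.card K : ℝ)
          = ((1 : ℝ) / 2 ^ m) ^ s.card := by
    intro A hg s b hs
    set b' : (Fin m → ZMod 16) → Fin m → ZMod 2 :=
      fun w => if hw : ∃ u ∈ s, g A u = w then b hw.choose else 0 with hb'
    have hb'g : ∀ u ∈ s, b' (g A u) = b u := by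
      intro u hu
      have hex : ∃ u' ∈ s, g A u' = g A u := ⟨u, hu, rfl⟩
      have h1 : b' (g A u) = b hex.choose := dif_pos hex
      have h2 : hex.choose = u := hg hex.choose_spec.2
      rw [h1, h2]
    have hset : (Finset.univ.filter (fun k : K => ∀ u ∈ s, h k (g A u) = b u))
        = (Finset.univ.filter (fun k : K => ∀ w ∈ s.image (g A), h k w = b' w)) := by
      apply Finset.filter_congr
      intro k _
      constructor
      · intro H w hw
        obtain ⟨u, hu, rfl⟩ := Finset.mem_image.mp hw
        rw [hb'g u hu]; exact H u hu
      · intro H u hu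
        have := H (g A u) (Finset.mem_image_of_mem (g A) hu)
        rwa [hb'g u hu] at this
    rw [hset, hK (s.image (g A)) b'
      (by rw [Finset.card_image_of_injective _ hg]; exact hs),
      Finset.card_image_of_injective _ hg]
  -- Step 2: counting matrices for which `g A` is not injective
  have matrix_bound : ∀ u v : Fin m → Bool, u ≠ v →
      16 ^ m * (univ.filter fun A : Matrix (Fin m) (Fin m) (ZMod q) =>
        g A u = g A v).card ≤ (q ^ m) ^ m := by
    intro u v huv
    set S := univ.filter (fun a : Fin m → ZMod q =>
      roundTo q 16 (∑ k, a k * binVec q u k) = roundTo q 16 (∑ k, a k * binVec q v k))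
      with hS
    have hrow : 16 * S.card ≤ q ^ m := rows_bound hq hc0 huv
    have hcount : (univ.filter fun A : Matrix (Fin m) (Fin m) (ZMod q) =>
        g A u = g A v).card ≤ S.card ^ m := by
      have hle : (univ.filter fun A : Matrix (Fin m) (Fin m) (ZMod q) =>
          g A u = g A v).card ≤ (Fintype.piFinset fun _ : Fin m => S).card := by
        apply Finset.card_le_card_of_injOn (fun A => fun i => A i)
        · intro A hA
          simp only [mem_coe, mem_filter, mem_univ, true_and] at hA
          simp only [mem_coe]
          rw [Fintype.mem_piFinset]
          intro i
          have := congrFun hA i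
          simp only [hgdef] at this
          rw [hS, mem_filter]
          refine ⟨mem_univ _, ?_⟩
          simpa [Matrix.mulVec, dotProduct] using this
        · intro A _ A' _ hAA
          exact hAA
      rwa [Fintype.card_piFinset, Finset.prod_const, Finset.card_univ, Fintype.card_fin] at hle
    calc 16 ^ m * (univ.filter fun A : Matrix (Fin m) (Fin m) (ZMod q) =>
          g A u = g A v).card
        ≤ 16 ^ m * S.card ^ m := Nat.mul_le_mul_left _ hcount
      _ = (16 * S.card) ^ m := by rw [mul_pow]
      _ ≤ (q ^ m) ^ m := Nat.pow_le_pow_left hrow m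
  have bad_bound : 16 ^ m * (univ.filter fun A : Matrix (Fin m) (Fin m) (ZMod q) =>
      ¬ Function.Injective (g A)).card ≤ 2 ^ (2 * m) * (q ^ m) ^ m := by
    have hsub2 : (univ.filter fun A : Matrix (Fin m) (Fin m) (ZMod q) =>
        ¬ Function.Injective (g A)) ⊆
        (univ.filter (fun p : (Fin m → Bool) × (Fin m → Bool) => p.1 ≠ p.2)).biUnion
          (fun p => univ.filter fun A : Matrix (Fin m) (Fin m) (ZMod q) =>
            g A p.1 = g A p.2) := by
      intro A hA
      simp only [mem_filter, mem_univ, true_and, Function.Injective, not_forall] at hA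
      obtain ⟨u, v, hguv, huv⟩ := hA
      rw [mem_biUnion]
      exact ⟨(u, v), by simp [huv], by simp [hguv]⟩
    have hcard1 : (univ.filter fun A : Matrix (Fin m) (Fin m) (ZMod q) =>
        ¬ Function.Injective (g A)).card
        ≤ ∑ p ∈ univ.filter (fun p : (Fin m → Bool) × (Fin m → Bool) => p.1 ≠ p.2),
            (univ.filter fun A : Matrix (Fin m) (Fin m) (ZMod q) =>
              g A p.1 = g A p.2).card :=
      le_trans (Finset.card_le_card hsub2) (Finset.card_biUnion_le)
    calc 16 ^ m * (univ.filter fun A : Matrix (Fin m) (Fin m) (ZMod q) =>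
          ¬ Function.Injective (g A)).card
        ≤ 16 ^ m * ∑ p ∈ univ.filter (fun p : (Fin m → Bool) × (Fin m → Bool) => p.1 ≠ p.2),
            (univ.filter fun A : Matrix (Fin m) (Fin m) (ZMod q) =>
              g A p.1 = g A p.2).card := Nat.mul_le_mul_left _ hcard1
      _ = ∑ p ∈ univ.filter (fun p : (Fin m → Bool) × (Fin m → Bool) => p.1 ≠ p.2),
            16 ^ m * (univ.filter fun A : Matrix (Fin m) (Fin m) (ZMod q) =>
              g A p.1 = g A p.2).card := by rw [Finset.mul_sum]
      _ ≤ ∑ p ∈ univ.filter (fun p : (Fin m → Bool) × (Fin m → Bool) => p.1 ≠ p.2),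
            (q ^ m) ^ m := by
          apply Finset.sum_le_sum
          intro p hp
          exact matrix_bound p.1 p.2 (by simpa using (mem_filter.mp hp).2)
      _ = (univ.filter (fun p : (Fin m → Bool) × (Fin m → Bool) => p.1 ≠ p.2)).card
            * (q ^ m) ^ m := by rw [Finset.sum_const, smul_eq_mul]
      _ ≤ 2 ^ (2 * m) * (q ^ m) ^ m := by
          apply Nat.mul_le_mul_right
          calc (univ.filter (fun p : (Fin m → Bool) × (Fin m → Bool) => p.1 ≠ p.2)).card
              ≤ (univ : Finset ((Fin m → Bool) × (Fin m → Bool))).card :=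
                Finset.card_filter_le _ _
            _ = 2 ^ (2 * m) := by
                rw [Finset.card_univ]
                simp [Fintype.card_prod, Fintype.card_fun, two_mul, pow_add]
  -- Step 3: assembling
  have hT : Fintype.card (Matrix (Fin m) (Fin m) (ZMod q)) = (q ^ m) ^ m := by
    show Fintype.card (Fin m → Fin m → ZMod q) = (q ^ m) ^ m
    simp [Fintype.card_fun, ZMod.card]
  have hsplit : (univ.filter fun A : Matrix (Fin m) (Fin m) (ZMod q) =>
      Function.Injective (g A)).card
      + (univ.filter fun A : Matrix (Fin m) (Fin m) (ZMod q) =>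
      ¬ Function.Injective (g A)).card = (q ^ m) ^ m := by
    rw [Finset.card_filter_add_card_filter_not, Finset.card_univ, hT]
  have hGI : (univ.filter fun A : Matrix (Fin m) (Fin m) (ZMod q) =>
      Function.Injective (g A)).card
      ≤ (Finset.univ.filter (fun A : Matrix (Fin m) (Fin m) (ZMod q) =>
          ∀ (s : Finset (Fin m → Bool)) (b : (Fin m → Bool) → Fin m → ZMod 2),
            s.card ≤ r →
            ((Finset.univ.filter (fun k : K =>
                ∀ u ∈ s,
                  h k (fun i => roundTo q 16 (A.mulVec (binVec q u) i)) = b u)).card : ℝ)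
                / (Fintype.card K : ℝ)
              = ((1 : ℝ) / 2 ^ m) ^ s.card)).card := by
    apply Finset.card_le_card
    intro A hA
    simp only [mem_filter, mem_univ, true_and] at hA ⊢
    exact good A hA
  -- real arithmetic
  set T : ℕ := (q ^ m) ^ m with hTdef
  set B : ℕ := (univ.filter fun A : Matrix (Fin m) (Fin m) (ZMod q) =>
      ¬ Function.Injective (g A)).card with hBdef
  set G : ℕ := (Finset.univ.filter (fun A : Matrix (Fin m) (Fin m) (ZMod q) =>
          ∀ (s : Finset (Fin m → Bool)) (b : (Fin m → Bool) → Fin m → ZMod 2),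
            s.card ≤ r →
            ((Finset.univ.filter (fun k : K =>
                ∀ u ∈ s,
                  h k (fun i => roundTo q 16 (A.mulVec (binVec q u) i)) = b u)).card : ℝ)
                / (Fintype.card K : ℝ)
              = ((1 : ℝ) / 2 ^ m) ^ s.card)).card with hGdef
  rw [hT]
  have hTpos : (0 : ℝ) < ((T : ℕ) : ℝ) := by
    have : 0 < T := by
      rw [hTdef]; positivity
    exact_mod_cast this
  have hGB : (T : ℝ) ≤ (G : ℝ) + (B : ℝ) := by
    have : T ≤ G + B := by
      rw [← hsplit]
      exact Nat.add_le_add_right hGI _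
    exact_mod_cast this
  have h2m : (0 : ℝ) < 2 ^ (2 * m) := by positivity
  have hBr : (B : ℝ) * (2 ^ (2 * m) * 2 ^ (2 * m)) ≤ 2 ^ (2 * m) * (T : ℝ) := by
    have h16m : ((16 : ℝ)) ^ m = 2 ^ (2 * m) * 2 ^ (2 * m) := by
      rw [← pow_add, show (16 : ℝ) = 2 ^ 4 by norm_num, ← pow_mul]
      ring_nf
    rw [← h16m]
    have : (16 ^ m * B : ℕ) ≤ (2 ^ (2 * m) * T : ℕ) := bad_bound
    calc (B : ℝ) * 16 ^ m = ((16 ^ m * B : ℕ) : ℝ) := by push_cast; ring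
      _ ≤ ((2 ^ (2 * m) * T : ℕ) : ℝ) := by exact_mod_cast this
      _ = 2 ^ (2 * m) * (T : ℝ) := by push_cast; ring
  have hB2 : (B : ℝ) * 2 ^ (2 * m) ≤ (T : ℝ) := by
    have := hBr
    nlinarith [h2m]
  have hBle : (B : ℝ) ≤ (T : ℝ) / 2 ^ (2 * m) := (le_div_iff₀ h2m).mpr hB2
  rw [le_div_iff₀ hTpos]
  have e : (1 - 2 / 2 ^ (2 * m)) * ((T : ℕ) : ℝ) = (T : ℝ) - 2 * ((T : ℝ) / 2 ^ (2 * m)) := by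
    ring
  rw [e]
  have hdiv0 : (0 : ℝ) ≤ (T : ℝ) / 2 ^ (2 * m) := div_nonneg hTpos.le h2m.le
  linarith
end

section
/- Let q ≥ 2 and ℓ, m ≥ 1 be integers with q^ℓ ≥ 2^m. For a uniformly random ℓ × m matrix A over Z/qZ, the probability that the number of vectors x ∈ {0,1}^m (viewed as 0/1 vectors over Z/qZ) satisfying A·x = 0 exceeds 2^ℓ is at most 2^{1−ℓ}. -/
open scoped BigOperators Classical
open Matrix

lemma card_row_ker (q m : ℕ) [NeZero q] (v : Fin m → ZMod q) (j : Fin m)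
    (hj : v j = 1) :
    (Finset.univ.filter (fun r : Fin m → ZMod q => r ⬝ᵥ v = 0)).card = q ^ (m - 1) := by
  have hm : 0 < m := j.pos
  set f : (Fin m → ZMod q) →+ ZMod q :=
    { toFun := fun r => r ⬝ᵥ v
      map_zero' := by simp
      map_add' := by intro a b; simp [add_dotProduct] }
  have hsurj : Function.Surjective f := by
    intro c
    exact ⟨Pi.single j c, by simp [f, single_dotProduct, hj]⟩
  have hquot : Nat.card ((Fin m → ZMod q) ⧸ f.ker) = q := by
    rw [Nat.card_congr (QuotientAddGroup.quotientKerEquivOfSurjective f hsurj).toEquiv]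
    simp [Nat.card_eq_fintype_card, ZMod.card]
  have htot : Nat.card (Fin m → ZMod q) = q ^ m := by
    simp [Nat.card_eq_fintype_card, Fintype.card_fun, ZMod.card]
  have hdec := AddSubgroup.card_eq_card_quotient_mul_card_addSubgroup f.ker
  rw [htot, hquot] at hdec
  have hker : Nat.card f.ker = q ^ (m - 1) := by
    have hq0 : 0 < q := (NeZero.pos q)
    have hpow : q * q ^ (m - 1) = q ^ m := by
      rw [← pow_succ']
      congr 1
      omega
    exact (Nat.eq_of_mul_eq_mul_left hq0 (by rw [hpow, hdec])).symm
  rw [← hker, Nat.card_eq_fintype_card]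
  rw [show (Fintype.card f.ker) =
      Fintype.card {r : Fin m → ZMod q // r ⬝ᵥ v = 0} from
    Fintype.card_congr (Equiv.subtypeEquivRight (fun r => AddMonoidHom.mem_ker (f := f))).symm]
  rw [Fintype.card_subtype]

lemma card_mat_ker (q l m : ℕ) [NeZero q] (v : Fin m → ZMod q) (j : Fin m)
    (hj : v j = 1) :
    (Finset.univ.filter (fun A : Matrix (Fin l) (Fin m) (ZMod q) => A.mulVec v = 0)).card
      = (q ^ (m - 1)) ^ l := by
  classical
  rw [← Fintype.card_subtype]
  have e1 : {A : Matrix (Fin l) (Fin m) (ZMod q) // A.mulVec v = 0}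
      ≃ {A : Fin l → Fin m → ZMod q // ∀ i, A i ⬝ᵥ v = 0} :=
    Equiv.subtypeEquivRight (fun A => by
      constructor
      · intro h i; exact congrFun h i
      · intro h; funext i; exact h i)
  have e2 : {A : Matrix (Fin l) (Fin m) (ZMod q) // A.mulVec v = 0}
      ≃ (Fin l → {r : Fin m → ZMod q // r ⬝ᵥ v = 0}) :=
    e1.trans (Equiv.subtypePiEquivPi (p := fun (_ : Fin l) (r : Fin m → ZMod q) => r ⬝ᵥ v = 0))
  rw [Fintype.card_congr e2]
  rw [Fintype.card_fun, Fintype.card_fin]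
  congr 1
  rw [Fintype.card_subtype]
  exact card_row_ker q m v j hj

/-- For `q ≥ 2` with `q^ℓ ≥ 2^m` and a uniformly random `ℓ × m` matrix
`A` over `Z/qZ`, the probability that more than `2^ℓ` binary vectors `x ∈ {0,1}^m` satisfy
`A x = 0` is at most `2^{1-ℓ}`. -/
theorem statement15 (q ℓ m : ℕ) (hq : 2 ≤ q) (hl : 1 ≤ ℓ) (hm : 1 ≤ m)
    (hql : 2 ^ m ≤ q ^ ℓ) [NeZero q] :
    ((Finset.univ.filter (fun A : Matrix (Fin ℓ) (Fin m) (ZMod q) =>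
          2 ^ ℓ < (Finset.univ.filter (fun x : Fin m → Bool =>
            A.mulVec (binVec q x) = 0)).card)).card : ℝ)
        / (Fintype.card (Matrix (Fin ℓ) (Fin m) (ZMod q)) : ℝ)
      ≤ 2 / 2 ^ ℓ := by
  classical
  set N := Fintype.card (Matrix (Fin ℓ) (Fin m) (ZMod q)) with hNdef
  have hNcard : N = q ^ (ℓ * m) := by
    have h0 : N = Fintype.card (Fin ℓ → Fin m → ZMod q) := rfl
    rw [h0, Fintype.card_fun, Fintype.card_fun, ZMod.card, Fintype.card_fin,
      Fintype.card_fin, ← pow_mul, mul_comm]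
  set c : Matrix (Fin ℓ) (Fin m) (ZMod q) → ℕ := fun A =>
    (Finset.univ.filter (fun x : Fin m → Bool => A.mulVec (binVec q x) = 0)).card with hc
  have hswap : ∑ A : Matrix (Fin ℓ) (Fin m) (ZMod q), c A
      = ∑ x : Fin m → Bool,
        (Finset.univ.filter (fun A : Matrix (Fin ℓ) (Fin m) (ZMod q) =>
          A.mulVec (binVec q x) = 0)).card := by
    simp only [hc, Finset.card_filter]
    exact Finset.sum_comm
  have hterm : ∀ x : Fin m → Bool,
      (Finset.univ.filter (fun A : Matrix (Fin ℓ) (Fin m) (ZMod q) =>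
          A.mulVec (binVec q x) = 0)).card
        ≤ (if x = (fun _ => false) then N else 0) + (q ^ (m - 1)) ^ ℓ := by
    intro x
    split
    · exact le_trans (le_trans (Finset.card_filter_le _ _) (le_of_eq Finset.card_univ))
        (Nat.le_add_right _ _)
    · next h =>
      obtain ⟨j, hj⟩ : ∃ j, x j = true := by
        by_contra hcon
        push_neg at hcon
        exact h (funext fun j => by simpa using hcon j)
      rw [zero_add]
      exact le_of_eq (card_mat_ker q ℓ m _ j (by simp [binVec, hj]))
  have hsum2 : ∑ A : Matrix (Fin ℓ) (Fin m) (ZMod q), c A ≤ 2 * N := by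
    rw [hswap]
    calc ∑ x : Fin m → Bool, (Finset.univ.filter
          (fun A : Matrix (Fin ℓ) (Fin m) (ZMod q) => A.mulVec (binVec q x) = 0)).card
        ≤ ∑ x : Fin m → Bool,
            ((if x = (fun _ => false) then N else 0) + (q ^ (m - 1)) ^ ℓ) :=
          Finset.sum_le_sum (fun x _ => hterm x)
      _ = N + 2 ^ m * (q ^ (m - 1)) ^ ℓ := by
          rw [Finset.sum_add_distrib, Finset.sum_ite_eq' Finset.univ
            ((fun _ => false) : Fin m → Bool) (fun _ => N), Finset.sum_const,
            Finset.card_univ, Fintype.card_fun, Fintype.card_bool, Fintype.card_fin,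
            smul_eq_mul]
          simp
      _ ≤ N + N := by
          have h1 : 2 ^ m * (q ^ (m - 1)) ^ ℓ ≤ q ^ ℓ * (q ^ (m - 1)) ^ ℓ :=
            Nat.mul_le_mul_right _ hql
          have h2 : q ^ ℓ * (q ^ (m - 1)) ^ ℓ = N := by
            rw [hNcard, ← pow_mul, ← pow_add]
            congr 1
            have : m - 1 + 1 = m := by omega
            nlinarith [this]
          omega
      _ = 2 * N := by ring
  set B := Finset.univ.filter (fun A : Matrix (Fin ℓ) (Fin m) (ZMod q) =>
    2 ^ ℓ < (Finset.univ.filter (fun x : Fin m → Bool =>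
      A.mulVec (binVec q x) = 0)).card) with hBdef
  have hmarkov : B.card * 2 ^ ℓ ≤ 2 * N := by
    calc B.card * 2 ^ ℓ = ∑ _A ∈ B, 2 ^ ℓ := by rw [Finset.sum_const, smul_eq_mul]
      _ ≤ ∑ A ∈ B, c A := Finset.sum_le_sum (fun A hA =>
          le_of_lt (Finset.mem_filter.mp hA).2)
      _ ≤ ∑ A : Matrix (Fin ℓ) (Fin m) (ZMod q), c A :=
          Finset.sum_le_sum_of_subset (Finset.filter_subset _ _)
      _ ≤ 2 * N := hsum2
  have hNpos : (0:ℝ) < (N:ℝ) := by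
    have : 0 < N := Fintype.card_pos
    exact_mod_cast this
  have h2pos : (0:ℝ) < (2:ℝ) ^ ℓ := by positivity
  rw [div_le_div_iff₀ hNpos h2pos]
  calc ((B.card : ℝ)) * 2 ^ ℓ = ((B.card * 2 ^ ℓ : ℕ) : ℝ) := by push_cast; ring
    _ ≤ ((2 * N : ℕ) : ℝ) := by exact_mod_cast hmarkov
    _ = 2 * N := by push_cast; ring
end
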